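/- arXiv:2011.12732 — 7 statements merged into one kernel-verified Lean document; each statement's English description precedes it below -/
import Mathlib

section
/- Let m, β, γ > 0 be real constants and let λ ∈ ℂ. There exists a twice continuously differentiable function f : [0,1] → ℂ, not identically zero, satisfying f''(x) = λ² f(x) for all x ∈ (0,1), f'(0) = (γλ + β) f(0), and f'(1) + m λ² f(1) = 0, if and only if λ satisfies the characteristic equation e^{2λ}((1+γ)λ + β)(1 + mλ) = ((1−γ)λ − β)(1 − mλ). Moreover, every twice continuously differentiable f : [0,1] → ℂ satisfying these three conditions is a scalar multiple of f_λ(x) = ((1+γ)λ + β)e^{λx} + ((1−γ)λ − β)e^{−λx}; in particular, each eigenvalue of this boundary eigenvalue problem is geometrically simple. -/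
open Set

lemma expDeriv (l : ℂ) (x : ℝ) :
    HasDerivAt (fun y : ℝ => Complex.exp (l * y)) (l * Complex.exp (l * x)) x := by
  have h : HasDerivAt (fun z : ℂ => Complex.exp (l * z)) (l * Complex.exp (l * x)) (x : ℂ) := by
    simpa [mul_comm] using ((hasDerivAt_id (x:ℂ)).const_mul l).cexp
  exact h.comp_ofReal

lemma constIcc (g : ℝ → ℂ) (hc : ContinuousOn g (Icc 0 1))
    (hg : ∀ x ∈ Icc (0:ℝ) 1, HasDerivAt g 0 x) :
    ∀ x ∈ Icc (0:ℝ) 1, g x = g 0 :=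
  constant_of_has_deriv_right_zero hc
    (fun x hx => (hg x (Ico_subset_Icc_self hx)).hasDerivWithinAt)

lemma derivsOf (f : ℝ → ℂ) (hf : ContDiff ℝ 2 f) :
    Differentiable ℝ f ∧ Differentiable ℝ (deriv f) ∧ Continuous (deriv (deriv f)) := by
  have h2 : ContDiff ℝ ((1:ℕ∞) + 1) f := by norm_num; exact hf
  rw [contDiff_succ_iff_deriv] at h2
  refine ⟨h2.1, (h2.2.2).differentiable (by norm_num), h2.2.2.continuous_deriv le_rfl⟩

lemma auxmu (l μ : ℂ) (hμ : μ ^ 2 = l ^ 2) (f : ℝ → ℂ) (hf : ContDiff ℝ 2 f)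
    (hode : ∀ x ∈ Icc (0:ℝ) 1, deriv (deriv f) x = l ^ 2 * f x) :
    ∀ x ∈ Icc (0:ℝ) 1,
      (deriv f x - μ * f x) * Complex.exp (μ * x) = deriv f 0 - μ * f 0 := by
  obtain ⟨hd, hdd, hcdd⟩ := derivsOf f hf
  have key : ∀ x ∈ Icc (0:ℝ) 1,
      (fun x : ℝ => (deriv f x - μ * f x) * Complex.exp (μ * x)) x
        = (fun x : ℝ => (deriv f x - μ * f x) * Complex.exp (μ * x)) 0 := by
    apply constIcc
    · exact ((hdd.continuous.sub (continuous_const.mul hd.continuous)).mul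
        (Complex.continuous_exp.comp (by continuity))).continuousOn
    · intro x hx
      have h1 : HasDerivAt (fun x : ℝ => deriv f x - μ * f x)
          (deriv (deriv f) x - μ * deriv f x) x :=
        (hdd x).hasDerivAt.sub ((hd x).hasDerivAt.const_mul μ)
      have h2 := h1.mul (expDeriv μ x)
      refine h2.congr_deriv ?_
      rw [hode x hx]
      linear_combination (-(Complex.exp (μ * x) * f x)) * hμ
  intro x hx
  simpa using key x hx

lemma reprl (l : ℂ) (hl : l ≠ 0) (f : ℝ → ℂ) (hf : ContDiff ℝ 2 f)
    (hode : ∀ x ∈ Icc (0:ℝ) 1, deriv (deriv f) x = l ^ 2 * f x) :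
    ∃ A B : ℂ, ∀ x ∈ Icc (0:ℝ) 1,
      f x = A * Complex.exp (l * x) + B * Complex.exp (-(l * x)) ∧
      deriv f x = l * A * Complex.exp (l * x) - l * B * Complex.exp (-(l * x)) := by
  refine ⟨(deriv f 0 + l * f 0) / (2 * l), (l * f 0 - deriv f 0) / (2 * l), ?_⟩
  intro x hx
  have e1 := auxmu l l rfl f hf hode x hx
  have e2 := auxmu l (-l) (by ring) f hf hode x hx
  simp only [neg_mul] at e2
  have hex : Complex.exp (l * x) * Complex.exp (-(l * x)) = 1 := by
    rw [← Complex.exp_add]; simp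
  have hv : deriv f x + l * f x = (deriv f 0 + l * f 0) * Complex.exp (l * x) := by
    linear_combination Complex.exp (l * x) * e2 - (deriv f x + l * f x) * hex
  have hu : deriv f x - l * f x = (deriv f 0 - l * f 0) * Complex.exp (-(l * x)) := by
    linear_combination Complex.exp (-(l * x)) * e1 - (deriv f x - l * f x) * hex
  have h2l : (2 : ℂ) * l ≠ 0 := by simpa using hl
  constructor
  · field_simp
    linear_combination hv - hu
  · field_simp
    linear_combination hv + hu

lemma odeExt (l : ℂ) (f : ℝ → ℂ) (hf : ContDiff ℝ 2 f)
    (hode : ∀ x ∈ Ioo (0:ℝ) 1, deriv (deriv f) x = l ^ 2 * f x) :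
    ∀ x ∈ Icc (0:ℝ) 1, deriv (deriv f) x = l ^ 2 * f x := by
  obtain ⟨hd, hdd, hcdd⟩ := derivsOf f hf
  have h := Set.EqOn.closure (fun x hx => hode x hx) hcdd
    (continuous_const.mul hd.continuous)
  rw [closure_Ioo one_ne_zero.symm] at h
  exact fun x hx => h hx

/-- eigenvalue problem for the operator A₂:
`f'' = λ²f` on `(0,1)`, `f'(0) = (γλ+β)f(0)`, `f'(1) + mλ²f(1) = 0`.
A nonzero C² solution exists iff the characteristic equation
`e^{2λ}((1+γ)λ+β)(1+mλ) = ((1-γ)λ-β)(1-mλ)` holds, and every solution is a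
scalar multiple of `f_λ(x) = ((1+γ)λ+β)e^{λx} + ((1-γ)λ-β)e^{-λx}`. -/
theorem stmt0 (m β γ : ℝ) (hm : 0 < m) (hβ : 0 < β) (hγ : 0 < γ) (l : ℂ) :
    ((∃ f : ℝ → ℂ, ContDiff ℝ 2 f ∧
        (∃ x ∈ Icc (0:ℝ) 1, f x ≠ 0) ∧
        (∀ x ∈ Ioo (0:ℝ) 1, deriv (deriv f) x = l ^ 2 * f x) ∧
        deriv f 0 = (γ * l + β) * f 0 ∧
        deriv f 1 + m * l ^ 2 * f 1 = 0) ↔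
      Complex.exp (2 * l) * ((1 + γ) * l + β) * (1 + m * l)
        = ((1 - γ) * l - β) * (1 - m * l)) ∧
    (∀ f : ℝ → ℂ, ContDiff ℝ 2 f →
        (∀ x ∈ Ioo (0:ℝ) 1, deriv (deriv f) x = l ^ 2 * f x) →
        deriv f 0 = (γ * l + β) * f 0 →
        deriv f 1 + m * l ^ 2 * f 1 = 0 →
        ∃ c : ℂ, ∀ x ∈ Icc (0:ℝ) 1,
          f x = c * (((1 + γ) * l + β) * Complex.exp (l * x)
            + ((1 - γ) * l - β) * Complex.exp (-(l * x)))) := by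
  have hβ' : (β : ℂ) ≠ 0 := by exact_mod_cast hβ.ne'
  set P : ℂ := (1 + γ) * l + β with hP
  set Q : ℂ := (1 - γ) * l - β with hQ
  -- uniqueness part
  have uniq : ∀ f : ℝ → ℂ, ContDiff ℝ 2 f →
      (∀ x ∈ Ioo (0:ℝ) 1, deriv (deriv f) x = l ^ 2 * f x) →
      deriv f 0 = (γ * l + β) * f 0 →
      deriv f 1 + m * l ^ 2 * f 1 = 0 →
      ∃ c : ℂ, ∀ x ∈ Icc (0:ℝ) 1,
        f x = c * (P * Complex.exp (l * x) + Q * Complex.exp (-(l * x))) := by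
    intro f hf hode hbc0 hbc1
    have hodeI := odeExt l f hf hode
    obtain ⟨hd, hdd, hcdd⟩ := derivsOf f hf
    by_cases hl : l = 0
    · -- f ≡ 0 on Icc
      subst hl
      have hdc : ∀ x ∈ Icc (0:ℝ) 1, deriv f x = deriv f 0 := by
        have := auxmu 0 0 rfl f hf hodeI
        intro x hx; simpa using this x hx
      have hd1 : deriv f 1 = 0 := by
        have := hbc1; simpa using this
      have hd0 : deriv f 0 = 0 := by
        rw [← hd1]; exact (hdc 1 (by norm_num)).symm
      have hf0 : f 0 = 0 := by
        have h0 := hbc0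
        rw [hd0] at h0
        simp only [zero_mul, add_zero, mul_zero, zero_add] at h0 ⊢
        simpa [hβ'] using h0
      have hfz : ∀ x ∈ Icc (0:ℝ) 1, f x = 0 := by
        have := constIcc f hd.continuous.continuousOn (fun x hx => by
          have := (hd x).hasDerivAt
          rwa [hdc x hx, hd0] at this)
        intro x hx; rw [this x hx, hf0]
      exact ⟨0, fun x hx => by rw [hfz x hx, zero_mul]⟩
    · obtain ⟨A, B, hrep⟩ := reprl l hl f hf hodeI
      have h0m : (0:ℝ) ∈ Icc (0:ℝ) 1 := by norm_num
      have hf0 : f 0 = A + B := by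
        have := (hrep 0 h0m).1; simpa using this
      have hdf0 : deriv f 0 = l * A - l * B := by
        have := (hrep 0 h0m).2; simpa using this
      have hAB : A * Q = B * P := by
        rw [hf0, hdf0] at hbc0
        rw [hQ, hP]
        linear_combination hbc0
      by_cases hPz : P = 0
      · have hQz : Q ≠ 0 := by
          intro h
          apply hl
          have : P + Q = 2 * l := by rw [hP, hQ]; ring
          rw [hPz, h] at this
          simpa using this.symm
        have hA : A = 0 := by
          have := hAB; rw [hPz, mul_zero] at this
          exact (mul_eq_zero.mp this).resolve_right hQz
        refine ⟨B / Q, fun x hx => ?_⟩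
        rw [(hrep x hx).1, hA, hPz]
        field_simp
        ring
      · refine ⟨A / P, fun x hx => ?_⟩
        rw [(hrep x hx).1]
        have hB : B = A * Q / P := by field_simp; linear_combination -hAB
        rw [hB]; field_simp
  refine ⟨⟨?_, ?_⟩, uniq⟩
  · -- existence → characteristic equation
    rintro ⟨f, hf, ⟨x0, hx0, hfx0⟩, hode, hbc0, hbc1⟩
    have hodeI := odeExt l f hf hode
    by_cases hl : l = 0
    · exfalso
      obtain ⟨c, hc⟩ := uniq f hf hode hbc0 hbc1
      apply hfx0
      rw [hc x0 hx0, hl, hP, hQ, hl]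
      simp
    · obtain ⟨A, B, hrep⟩ := reprl l hl f hf hodeI
      have h0m : (0:ℝ) ∈ Icc (0:ℝ) 1 := by norm_num
      have h1m : (1:ℝ) ∈ Icc (0:ℝ) 1 := by norm_num
      have hf0 : f 0 = A + B := by simpa using (hrep 0 h0m).1
      have hdf0 : deriv f 0 = l * A - l * B := by simpa using (hrep 0 h0m).2
      have hAB : A * Q = B * P := by
        rw [hf0, hdf0] at hbc0; rw [hQ, hP]; linear_combination hbc0
      have hf1 : f 1 = A * Complex.exp l + B * Complex.exp (-l) := by
        have := (hrep 1 h1m).1; simpa using this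
      have hdf1 : deriv f 1 = l * A * Complex.exp l - l * B * Complex.exp (-l) := by
        have := (hrep 1 h1m).2; simpa using this
      have hex : Complex.exp l * Complex.exp (-l) = 1 := by
        rw [← Complex.exp_add]; simp
      have he2 : Complex.exp (2 * l) = Complex.exp l * Complex.exp l := by
        rw [← Complex.exp_add]; ring_nf
      -- from bc1:
      have hE : A * Complex.exp (2 * l) * (1 + m * l) = B * (1 - m * l) := by
        rw [hf1, hdf1] at hbc1
        rw [he2]
        refine mul_left_cancel₀ hl ?_
        linear_combination Complex.exp l * hbc1 - (l * B * (m * l - 1)) * hex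
      by_cases hPz : P = 0
      · have hQz : Q ≠ 0 := by
          intro h; apply hl
          have : P + Q = 2 * l := by rw [hP, hQ]; ring
          rw [hPz, h] at this; simpa using this.symm
        have hA : A = 0 := by
          have := hAB; rw [hPz, mul_zero] at this
          exact (mul_eq_zero.mp this).resolve_right hQz
        have hB : B ≠ 0 := by
          intro h
          apply hfx0
          rw [(hrep x0 hx0).1, hA, h]; ring
        have hml : (1 : ℂ) - m * l = 0 := by
          have := hE; rw [hA] at this
          simp only [zero_mul] at this
          exact ((mul_eq_zero.mp this.symm).resolve_left hB)
        rw [hPz, hml]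
        ring
      · have hA : A ≠ 0 := by
          intro h
          have hB : B = 0 := by
            have := hAB; rw [h, zero_mul] at this
            exact (mul_eq_zero.mp this.symm).resolve_right hPz
          apply hfx0
          rw [(hrep x0 hx0).1, h, hB]; ring
        have hBv : B = A * Q / P := by field_simp; linear_combination -hAB
        rw [hBv] at hE
        field_simp at hE
        -- hE : A * exp(2l) * (1+ml) * P = A * Q * (1-ml)  (roughly)
        have hkey : A * (Complex.exp (2*l) * (1 + m*l) * P) = A * (Q * (1 - m*l)) := by
          linear_combination A * hE
        linear_combination mul_left_cancel₀ hA hkey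
  · -- characteristic equation → existence
    intro hchar
    have hl : l ≠ 0 := by
      intro h
      have h1 : Complex.exp (2 * (0:ℂ)) = 1 := by simp
      rw [hP, hQ, h, h1] at hchar
      exact hβ' (by linear_combination hchar / 2)
    set f : ℝ → ℂ := fun x => P * Complex.exp (l * x) + Q * Complex.exp (-l * x) with hfdef
    have hder : ∀ x : ℝ, HasDerivAt f
        (P * (l * Complex.exp (l * x)) + Q * (-l * Complex.exp (-l * x))) x :=
      fun x => ((expDeriv l x).const_mul P).add ((expDeriv (-l) x).const_mul Q)
    set g : ℝ → ℂ := fun x => P * l * Complex.exp (l * x) + Q * (-l) * Complex.exp (-l * x)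
      with hgdef
    have hdg : deriv f = g := by
      funext x
      rw [(hder x).deriv, hgdef]
      ring
    have hg : ∀ x : ℝ, HasDerivAt g
        (P * l * (l * Complex.exp (l * x)) + Q * (-l) * (-l * Complex.exp (-l * x))) x :=
      fun x => ((expDeriv l x).const_mul (P * l)).add ((expDeriv (-l) x).const_mul (Q * (-l)))
    have hce : ∀ μ : ℂ, ContDiff ℝ 2 (fun x : ℝ => Complex.exp (μ * x)) := by
      intro μ
      have h1 : ContDiff ℝ 2 (fun x : ℝ => μ * (x : ℂ)) :=
        contDiff_const.mul (Complex.ofRealCLM.contDiff.of_le le_top)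
      exact ((Complex.contDiff_exp (𝕜 := ℂ) (n := 2)).restrict_scalars ℝ).comp h1
    have hex : Complex.exp l * Complex.exp (-l) = 1 := by
      rw [← Complex.exp_add]; simp
    have he2 : Complex.exp (2 * l) = Complex.exp l * Complex.exp l := by
      rw [← Complex.exp_add]; ring_nf
    refine ⟨f, ?_, ⟨0, by norm_num, ?_⟩, ?_, ?_, ?_⟩
    · exact (contDiff_const.mul (hce l)).add (contDiff_const.mul (hce (-l)))
    · -- f 0 ≠ 0
      simp only [hfdef, Complex.ofReal_zero, mul_zero, neg_zero, Complex.exp_zero, mul_one]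
      rw [hP, hQ]
      intro h
      exact hl (by linear_combination h / 2)
    · -- ODE
      intro x _
      rw [hdg, (hg x).deriv, hfdef]
      ring
    · -- BC at 0
      rw [hdg]
      simp only [hfdef, hgdef, Complex.ofReal_zero, mul_zero, neg_zero, Complex.exp_zero, mul_one]
      rw [hP, hQ]
      ring
    · -- BC at 1
      rw [hdg]
      simp only [hfdef, hgdef, Complex.ofReal_one, mul_one]
      linear_combination (l * Complex.exp (-l)) * hchar
        - (l * Complex.exp (-l) * P * (1 + m * l)) * he2
        - (l * Complex.exp l * P * (1 + m * l)) * hex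
end

section
/- Let m, β, γ > 0 be real constants. Every λ ∈ ℂ satisfying the characteristic equation e^{2λ}((1+γ)λ + β)(1 + mλ) = ((1−γ)λ − β)(1 − mλ) has strictly negative real part: Re λ < 0. -/
set_option maxHeartbeats 2000000 in
/-- every root of the characteristic equation
`e^{2λ}((1+γ)λ+β)(1+mλ) = ((1-γ)λ-β)(1-mλ)` (with `m, β, γ > 0`)
has strictly negative real part. -/
theorem stmt1 (m β γ : ℝ) (hm : 0 < m) (hβ : 0 < β) (hγ : 0 < γ) (l : ℂ)
    (hchar : Complex.exp (2 * l) * ((1 + γ) * l + β) * (1 + m * l)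
      = ((1 - γ) * l - β) * (1 - m * l)) :
    l.re < 0 := by
  by_contra hre
  push_neg at hre
  set x := l.re with hx
  set y := l.im with hy
  have hl0 : l ≠ 0 := by
    rintro rfl
    simp at hchar
    have : (β : ℂ) = 0 := by linear_combination hchar / 2
    exact hβ.ne' (by exact_mod_cast this)
  have hxy : 0 < x ^ 2 + y ^ 2 := by
    have := Complex.normSq_pos.mpr hl0
    rw [Complex.normSq_apply] at this
    nlinarith
  -- abs of both sides
  have habs := congrArg norm hchar
  rw [norm_mul, norm_mul, norm_mul, Complex.norm_exp] at habs
  have hre2 : ((2 : ℂ) * l).re = 2 * x := by simp [hx]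
  rw [hre2] at habs
  set A := ‖(1 + γ) * l + β‖ with hA
  set B := ‖(1 - γ) * l - β‖ with hB
  set C := ‖1 + m * l‖ with hC
  set D := ‖1 - m * l‖ with hD
  have hAsq : A ^ 2 = (1 + γ) ^ 2 * (x ^ 2 + y ^ 2) + 2 * β * (1 + γ) * x + β ^ 2 := by
    rw [hA, Complex.sq_norm, Complex.normSq_apply]
    simp [Complex.add_re, Complex.add_im, Complex.mul_re, Complex.mul_im, ← hx, ← hy]
    ring
  have hBsq : B ^ 2 = (1 - γ) ^ 2 * (x ^ 2 + y ^ 2) - 2 * β * (1 - γ) * x + β ^ 2 := by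
    rw [hB, Complex.sq_norm, Complex.normSq_apply]
    simp [Complex.sub_re, Complex.sub_im, Complex.mul_re, Complex.mul_im, ← hx, ← hy]
    ring
  have hCsq : C ^ 2 = 1 + 2 * m * x + m ^ 2 * (x ^ 2 + y ^ 2) := by
    rw [hC, Complex.sq_norm, Complex.normSq_apply]
    simp [Complex.add_re, Complex.add_im, Complex.mul_re, Complex.mul_im, ← hx, ← hy]
    ring
  have hDsq : D ^ 2 = 1 - 2 * m * x + m ^ 2 * (x ^ 2 + y ^ 2) := by
    rw [hD, Complex.sq_norm, Complex.normSq_apply]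
    simp [Complex.sub_re, Complex.sub_im, Complex.mul_re, Complex.mul_im, ← hx, ← hy]
    ring
  have hA0 : 0 ≤ A := norm_nonneg _
  have hB0 : 0 ≤ B := norm_nonneg _
  have hC0 : 0 ≤ C := norm_nonneg _
  have hD0 : 0 ≤ D := norm_nonneg _
  have hAB : B < A := by nlinarith
  have hDC : D ≤ C := by nlinarith
  have hCpos : 0 < C := by nlinarith
  have hexp : 1 ≤ Real.exp (2 * x) := by
    rw [show (1:ℝ) = Real.exp 0 from (Real.exp_zero).symm]
    exact Real.exp_le_exp.mpr (by linarith)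
  nlinarith [mul_pos (lt_of_le_of_lt hB0 hAB) hCpos]
end

section
/- Let m, β, γ > 0 be real constants with γ ≠ 1. Set r = |γ−1|/(γ+1), and for each integer n let n_β = n if γ > 1 and n_β = n + 1/2 if 0 < γ < 1, and put μₙ = (1/2)·ln r + n_β π i. Then there exist a natural number N and a constant C > 0 such that for every integer n with |n| ≥ N there exists λₙ ∈ ℂ satisfying e^{2λₙ}((1+γ)λₙ + β)(1 + mλₙ) = ((1−γ)λₙ − β)(1 − mλₙ) and |λₙ − μₙ| ≤ C/|n|. -/
/-- `n_β = n` if `γ > 1` and `n + 1/2` if `0 < γ < 1`. -/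
noncomputable def nbeta (γ : ℝ) (n : ℤ) : ℝ := if 1 < γ then (n : ℝ) else (n : ℝ) + 1 / 2

/-- `μₙ = (1/2)·ln(|γ-1|/(γ+1)) + n_β π i`. -/
noncomputable def muSeq (γ : ℝ) (n : ℤ) : ℂ :=
  (Real.log (|γ - 1| / (γ + 1)) / 2 : ℝ) + (nbeta γ n * Real.pi : ℝ) * Complex.I

noncomputable def Pf (m β γ : ℝ) (l : ℂ) : ℂ := ((1 - γ) * l - β) * (1 - m * l)
noncomputable def Qf (m β γ : ℝ) (l : ℂ) : ℂ := ((1 + γ) * l + β) * (1 + m * l)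
noncomputable def aC (γ : ℝ) : ℝ := (γ - 1) / (γ + 1)
noncomputable def Hf (m β γ : ℝ) (l : ℂ) : ℂ := Pf m β γ l / ((aC γ : ℝ) * Qf m β γ l)
noncomputable def cC (m γ : ℝ) : ℝ := (1 + γ) * m / 4
noncomputable def c1C (m β γ : ℝ) : ℝ := (1 - γ) + β * m - aC γ * ((1 + γ) + β * m)
noncomputable def c0C (β γ : ℝ) : ℝ := -β * (1 + aC γ)
noncomputable def AC (m β γ : ℝ) : ℝ := -2 * m * (1 - γ^2 + β * m)
noncomputable def BC (m β γ : ℝ) : ℝ := 2 * β * m * γ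
noncomputable def DC (m β : ℝ) : ℝ := 2 * β * (1 + β * m)
noncomputable def K1C (m β γ : ℝ) : ℝ :=
  (|c1C m β γ| + |c0C β γ|) / (|aC γ| * cC m γ) + 1
noncomputable def K2C (m β γ : ℝ) : ℝ :=
  (|AC m β γ| + 2 * |BC m β γ| + |DC m β|) / (|aC γ| * (cC m γ)^2) + 1
noncomputable def R0C (m β γ : ℝ) : ℝ := max 1 (max (2*β/(1+γ)) (2/m))
noncomputable def Tf (m β γ : ℝ) (n : ℤ) (l : ℂ) : ℂ :=
  muSeq γ n + Complex.log (Hf m β γ l) / 2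

section Aux
variable {m β γ : ℝ}

lemma hγp (hγ : 0 < γ) : 0 < γ + 1 := by linarith
lemma aC_ne (hγ : 0 < γ) (hγ1 : γ ≠ 1) : aC γ ≠ 0 :=
  div_ne_zero (sub_ne_zero.2 hγ1) (ne_of_gt (hγp hγ))
lemma aC_abs_pos (hγ : 0 < γ) (hγ1 : γ ≠ 1) : 0 < |aC γ| := abs_pos.2 (aC_ne hγ hγ1)
lemma cC_pos (hm : 0 < m) (hγ : 0 < γ) : 0 < cC m γ := by unfold cC; positivity
lemma K1C_pos (hm : 0 < m) (hγ : 0 < γ) (hγ1 : γ ≠ 1) : 0 < K1C m β γ := by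
  unfold K1C
  have h2 := aC_abs_pos hγ hγ1
  have h3 := cC_pos (m := m) hm hγ
  have h1 : 0 ≤ (|c1C m β γ| + |c0C β γ|) / (|aC γ| * cC m γ) := by positivity
  linarith
lemma K1C_one (hm : 0 < m) (hγ : 0 < γ) (hγ1 : γ ≠ 1) : 1 ≤ K1C m β γ := by
  unfold K1C
  have h2 := aC_abs_pos hγ hγ1
  have h3 := cC_pos (m := m) hm hγ
  have h1 : 0 ≤ (|c1C m β γ| + |c0C β γ|) / (|aC γ| * cC m γ) := by positivity
  linarith
lemma K2C_one (hm : 0 < m) (hγ : 0 < γ) (hγ1 : γ ≠ 1) : 1 ≤ K2C m β γ := by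
  unfold K2C
  have h2 := aC_abs_pos hγ hγ1
  have h3 := cC_pos (m := m) hm hγ
  have h1 : 0 ≤ (|AC m β γ| + 2 * |BC m β γ| + |DC m β|) / (|aC γ| * (cC m γ)^2) := by
    positivity
  linarith

lemma cast_γ1_ne (hγ : 0 < γ) : ((γ:ℂ) + 1) ≠ 0 := by
  have h' : ((γ + 1 : ℝ) : ℂ) ≠ 0 := Complex.ofReal_ne_zero.2 (ne_of_gt (hγp hγ))
  push_cast at h'
  exact h'

/-- numerator identity for `H - 1` -/
lemma PQ1 (hγ : 0 < γ) (hγ1 : γ ≠ 1) (l : ℂ) :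
    Pf m β γ l - (aC γ : ℂ) * Qf m β γ l = (c1C m β γ : ℂ) * l + (c0C β γ : ℂ) := by
  have hcγ := cast_γ1_ne hγ
  unfold Pf Qf c1C c0C aC
  push_cast
  field_simp
  ring

/-- difference identity -/
lemma PQ2 (l l' : ℂ) :
    Pf m β γ l * Qf m β γ l' - Pf m β γ l' * Qf m β γ l
      = (l - l') * ((AC m β γ : ℂ) * (l * l') + (BC m β γ : ℂ) * (l + l') + (DC m β : ℂ)) := by
  unfold Pf Qf AC BC DC
  push_cast
  ring

/-- lower bound for `|Q|` -/
lemma Qf_lower (hm : 0 < m) (hβ : 0 < β) (hγ : 0 < γ) (l : ℂ) (hl : R0C m β γ ≤ ‖l‖) :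
    cC m γ * (‖l‖)^2 ≤ ‖Qf m β γ l‖ := by
  have hβl : 2*β/(1+γ) ≤ ‖l‖ :=
    le_trans (le_trans (le_max_left _ _) (le_max_right _ _)) hl
  have hml : 2/m ≤ ‖l‖ :=
    le_trans (le_trans (le_max_right _ _) (le_max_right _ _)) hl
  have h1 : (1+γ)/2 * ‖l‖ ≤ ‖((1 + γ) * l + β : ℂ)‖ := by
    have ht : ‖((1+γ:ℝ):ℂ) * l‖ - ‖((β:ℝ):ℂ)‖ ≤ ‖((1+γ:ℝ):ℂ) * l + ((β:ℝ):ℂ)‖ := by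
      have h0 := norm_sub_norm_le (((1+γ:ℝ):ℂ) * l) (-((β:ℝ):ℂ))
      rw [sub_neg_eq_add, norm_neg] at h0
      exact h0
    simp only [norm_mul, Complex.norm_real, Real.norm_eq_abs] at ht
    rw [abs_of_pos (by linarith : (0:ℝ) < 1+γ), abs_of_pos hβ] at ht
    have hβ2 : β ≤ (1+γ)/2 * ‖l‖ := by
      rw [div_le_iff₀ (by linarith : (0:ℝ) < 1+γ)] at hβl
      nlinarith
    have hcast : ‖(((1+γ:ℝ):ℂ) * l + ((β:ℝ):ℂ))‖
        = ‖((1 + γ) * l + β : ℂ)‖ := by push_cast; ring_nf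
    rw [hcast] at ht
    linarith
  have h2 : m/2 * ‖l‖ ≤ ‖(1 + m * l : ℂ)‖ := by
    have ht : ‖((m:ℝ):ℂ) * l‖ - ‖(1:ℂ)‖ ≤ ‖(1:ℂ) + ((m:ℝ):ℂ) * l‖ := by
      have h0 := norm_sub_norm_le (((m:ℝ):ℂ) * l) (-(1:ℂ))
      rw [sub_neg_eq_add, norm_neg, add_comm] at h0
      exact h0
    simp only [norm_mul, Complex.norm_real, Real.norm_eq_abs, norm_one] at ht
    rw [abs_of_pos hm] at ht
    have hm2 : (1:ℝ) ≤ m/2 * ‖l‖ := by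
      rw [div_le_iff₀ hm] at hml
      nlinarith
    have hcast : ‖((1:ℂ) + ((m:ℝ):ℂ) * l)‖ = ‖(1 + m * l : ℂ)‖ := by
      push_cast; ring_nf
    rw [hcast] at ht
    linarith
  have habsQ : ‖Qf m β γ l‖
      = ‖((1 + γ) * l + β : ℂ)‖ * ‖(1 + m * l : ℂ)‖ :=
    norm_mul _ _
  rw [habsQ]
  calc cC m γ * (‖l‖)^2 = ((1+γ)/2 * ‖l‖) * (m/2 * ‖l‖) := by
        unfold cC; ring
    _ ≤ _ := mul_le_mul h1 h2 (by positivity) (norm_nonneg _)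

lemma Qf_ne (hm : 0 < m) (hβ : 0 < β) (hγ : 0 < γ) (l : ℂ) (hl : R0C m β γ ≤ ‖l‖) (h1 : 1 ≤ ‖l‖) :
    Qf m β γ l ≠ 0 := by
  have hb := Qf_lower hm hβ hγ l hl
  have h5 : (0:ℝ) < ‖l‖ := by linarith
  have h2 : (0:ℝ) < cC m γ * (‖l‖)^2 :=
    mul_pos (cC_pos hm hγ) (pow_pos h5 2)
  intro h
  rw [h] at hb
  simp only [norm_zero] at hb
  linarith

/-- `|H - 1| ≤ (K1 - 1)/|l|` -/
lemma Hf_sub_one (hm : 0 < m) (hβ : 0 < β) (hγ : 0 < γ) (hγ1 : γ ≠ 1) (l : ℂ) (hl : R0C m β γ ≤ ‖l‖) (h1 : 1 ≤ ‖l‖) :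
    ‖Hf m β γ l - 1‖ ≤ (K1C m β γ - 1) / ‖l‖ := by
  have hQne := Qf_ne hm hβ hγ l hl h1
  have haC : (aC γ : ℂ) ≠ 0 := Complex.ofReal_ne_zero.2 (aC_ne hγ hγ1)
  have hid : Hf m β γ l - 1
      = (Pf m β γ l - (aC γ : ℂ) * Qf m β γ l) / ((aC γ : ℂ) * Qf m β γ l) := by
    unfold Hf
    field_simp
  rw [hid, PQ1 hγ hγ1, norm_div, norm_mul, Complex.norm_real, Real.norm_eq_abs]
  have hnum : ‖((c1C m β γ : ℂ) * l + (c0C β γ : ℂ))‖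
      ≤ (|c1C m β γ| + |c0C β γ|) * ‖l‖ := by
    calc ‖((c1C m β γ : ℂ) * l + (c0C β γ : ℂ))‖
        ≤ ‖((c1C m β γ : ℂ) * l)‖ + ‖((c0C β γ : ℂ))‖ :=
          norm_add_le _ _
      _ = |c1C m β γ| * ‖l‖ + |c0C β γ| := by
          rw [norm_mul, Complex.norm_real, Real.norm_eq_abs, Complex.norm_real, Real.norm_eq_abs]
      _ ≤ |c1C m β γ| * ‖l‖ + |c0C β γ| * ‖l‖ := by
          nlinarith [abs_nonneg (c0C β γ)]
      _ = (|c1C m β γ| + |c0C β γ|) * ‖l‖ := by ring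
  have hden : |aC γ| * (cC m γ * (‖l‖)^2) ≤ |aC γ| * ‖Qf m β γ l‖ := by
    apply mul_le_mul_of_nonneg_left (Qf_lower hm hβ hγ l hl) (abs_nonneg _)
  have h5 : (0:ℝ) < ‖l‖ := by linarith
  have hdenpos : (0:ℝ) < |aC γ| * (cC m γ * (‖l‖)^2) :=
    mul_pos (aC_abs_pos hγ hγ1) (mul_pos (cC_pos hm hγ) (pow_pos h5 2))
  calc ‖((c1C m β γ : ℂ) * l + (c0C β γ : ℂ))‖ / (|aC γ| * ‖Qf m β γ l‖)
      ≤ ((|c1C m β γ| + |c0C β γ|) * ‖l‖) / (|aC γ| * (cC m γ * (‖l‖)^2)) :=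
        div_le_div₀ (by positivity) hnum hdenpos hden
    _ = (K1C m β γ - 1) / ‖l‖ := by
        unfold K1C
        have hl0 : ‖l‖ ≠ 0 := by positivity
        have hane : |aC γ| ≠ 0 := ne_of_gt (aC_abs_pos hγ hγ1)
        have hcne : cC m γ ≠ 0 := ne_of_gt (cC_pos hm hγ)
        field_simp
        ring

/-- Lipschitz bound for `H` -/
lemma Hf_lip (hm : 0 < m) (hβ : 0 < β) (hγ : 0 < γ) (hγ1 : γ ≠ 1) (l l' : ℂ) (hl : R0C m β γ ≤ ‖l‖) (h1 : 1 ≤ ‖l‖)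
    (hl' : R0C m β γ ≤ ‖l'‖) (h1' : 1 ≤ ‖l'‖) :
    ‖Hf m β γ l - Hf m β γ l'‖
      ≤ (K2C m β γ - 1) * ‖l - l'‖ / (‖l‖ * ‖l'‖) := by
  have hQne := Qf_ne hm hβ hγ l hl h1
  have hQne' := Qf_ne hm hβ hγ l' hl' h1'
  have haC : (aC γ : ℂ) ≠ 0 := Complex.ofReal_ne_zero.2 (aC_ne hγ hγ1)
  have hid : Hf m β γ l - Hf m β γ l'
      = (Pf m β γ l * Qf m β γ l' - Pf m β γ l' * Qf m β γ l)
        / ((aC γ : ℂ) * (Qf m β γ l * Qf m β γ l')) := by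
    unfold Hf
    field_simp
  rw [hid, PQ2, norm_div, norm_mul, norm_mul, norm_mul, Complex.norm_real, Real.norm_eq_abs]
  set u := ‖l‖ with hu
  set u' := ‖l'‖ with hu'
  have hnum : ‖((AC m β γ : ℂ) * (l * l') + (BC m β γ : ℂ) * (l + l') + (DC m β : ℂ))‖
      ≤ (|AC m β γ| + 2 * |BC m β γ| + |DC m β|) * (u * u') := by
    have t1 : ‖((AC m β γ : ℂ) * (l * l'))‖ = |AC m β γ| * (u * u') := by
      rw [norm_mul, norm_mul, Complex.norm_real, Real.norm_eq_abs]
    have t2 : ‖((BC m β γ : ℂ) * (l + l'))‖ ≤ |BC m β γ| * (u + u') := by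
      rw [norm_mul, Complex.norm_real, Real.norm_eq_abs]
      exact mul_le_mul_of_nonneg_left (norm_add_le _ _) (abs_nonneg _)
    have t3 : ‖((DC m β : ℂ))‖ = |DC m β| := by rw [Complex.norm_real, Real.norm_eq_abs]
    have hu1 : u ≤ u * u' := by nlinarith
    have hu2 : u' ≤ u * u' := by nlinarith
    have huu : (1:ℝ) ≤ u * u' := le_trans h1 hu1
    have t4 : |BC m β γ| * (u + u') ≤ 2 * |BC m β γ| * (u * u') := by
      have b1 := mul_le_mul_of_nonneg_left hu1 (abs_nonneg (BC m β γ))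
      have b2 := mul_le_mul_of_nonneg_left hu2 (abs_nonneg (BC m β γ))
      nlinarith
    have t5 : |DC m β| ≤ |DC m β| * (u * u') :=
      le_mul_of_one_le_right (abs_nonneg _) huu
    calc ‖((AC m β γ : ℂ) * (l * l') + (BC m β γ : ℂ) * (l + l') + (DC m β : ℂ))‖
        ≤ ‖((AC m β γ : ℂ) * (l * l') + (BC m β γ : ℂ) * (l + l'))‖
            + ‖((DC m β : ℂ))‖ := norm_add_le _ _
      _ ≤ ‖((AC m β γ : ℂ) * (l * l'))‖ + ‖((BC m β γ : ℂ) * (l + l'))‖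
            + ‖((DC m β : ℂ))‖ := by linarith [norm_add_le ((AC m β γ : ℂ) * (l * l')) ((BC m β γ : ℂ) * (l + l'))]
      _ ≤ |AC m β γ| * (u * u') + |BC m β γ| * (u + u') + |DC m β| := by
          rw [t1, t3]; linarith
      _ ≤ |AC m β γ| * (u * u') + 2 * |BC m β γ| * (u * u') + |DC m β| * (u * u') := by
          linarith
      _ = (|AC m β γ| + 2 * |BC m β γ| + |DC m β|) * (u * u') := by ring
  have hden : |aC γ| * ((cC m γ * u^2) * (cC m γ * u'^2))
      ≤ |aC γ| * (‖Qf m β γ l‖ * ‖Qf m β γ l'‖) := by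
    apply mul_le_mul_of_nonneg_left _ (abs_nonneg _)
    apply mul_le_mul (Qf_lower hm hβ hγ l hl) (Qf_lower hm hβ hγ l' hl') _ (norm_nonneg _)
    have := cC_pos (m := m) (γ := γ) hm hγ
    positivity
  have hdenpos : (0:ℝ) < |aC γ| * ((cC m γ * u^2) * (cC m γ * u'^2)) := by
    have h3 := aC_abs_pos (γ := γ) hγ hγ1
    have h4 := cC_pos (m := m) (γ := γ) hm hγ
    have h5 : (0:ℝ) < u := by linarith
    have h6 : (0:ℝ) < u' := by linarith
    positivity
  calc ‖l - l'‖
        * ‖((AC m β γ : ℂ) * (l * l') + (BC m β γ : ℂ) * (l + l') + (DC m β : ℂ))‖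
        / (|aC γ| * (‖Qf m β γ l‖ * ‖Qf m β γ l'‖))
      ≤ ‖l - l'‖ * ((|AC m β γ| + 2 * |BC m β γ| + |DC m β|) * (u * u'))
        / (|aC γ| * ((cC m γ * u^2) * (cC m γ * u'^2))) := by
        apply div_le_div₀ (by positivity) _ hdenpos hden
        exact mul_le_mul_of_nonneg_left hnum (norm_nonneg _)
    _ = (K2C m β γ - 1) * ‖l - l'‖ / (u * u') := by
        unfold K2C
        have h5 : u ≠ 0 := by positivity
        have h6 : u' ≠ 0 := by positivity
        have hane : |aC γ| ≠ 0 := ne_of_gt (aC_abs_pos hγ hγ1)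
        have hcne : cC m γ ≠ 0 := ne_of_gt (cC_pos hm hγ)
        field_simp
        ring


/-- Lipschitz bound for `log` on the ball of radius 1/2 around 1. -/
lemma log_lip {w w' : ℂ} (hw : ‖w - 1‖ ≤ 1/2) (hw' : ‖w' - 1‖ ≤ 1/2) :
    ‖Complex.log w - Complex.log w'‖ ≤ 2 * ‖w - w'‖ := by
  have hconv : Convex ℝ (Metric.closedBall (1:ℂ) (1/2)) := convex_closedBall _ _
  have hre : ∀ x ∈ Metric.closedBall (1:ℂ) (1/2), (1/2 : ℝ) ≤ x.re := by
    intro x hx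
    rw [Metric.mem_closedBall, Complex.dist_eq] at hx
    have h1 := Complex.abs_re_le_norm (x - 1)
    simp only [Complex.sub_re, Complex.one_re] at h1
    have h2 := abs_le.1 (h1.trans hx)
    linarith [h2.1]
  have hderiv : ∀ x ∈ Metric.closedBall (1:ℂ) (1/2),
      HasDerivWithinAt Complex.log x⁻¹ (Metric.closedBall (1:ℂ) (1/2)) x := by
    intro x hx
    exact (Complex.hasDerivAt_log
      (Complex.mem_slitPlane_iff.2 (Or.inl (by linarith [hre x hx])))).hasDerivWithinAt
  have hbound : ∀ x ∈ Metric.closedBall (1:ℂ) (1/2), ‖x⁻¹‖ ≤ 2 := by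
    intro x hx
    have hxabs : (1/2 : ℝ) ≤ ‖x‖ := by
      calc (1/2:ℝ) ≤ x.re := hre x hx
        _ ≤ |x.re| := le_abs_self _
        _ ≤ ‖x‖ := Complex.abs_re_le_norm x
    rw [norm_inv]
    rw [inv_le_comm₀ (by linarith) (by norm_num)]
    linarith
  have := hconv.norm_image_sub_le_of_norm_hasDerivWithin_le hderiv hbound
    (by rw [Metric.mem_closedBall, Complex.dist_eq]; exact hw')
    (by rw [Metric.mem_closedBall, Complex.dist_eq]; exact hw)
  simpa [Complex.dist_eq] using this

lemma log_near_one {w : ℂ} (hw : ‖w - 1‖ ≤ 1/2) :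
    ‖Complex.log w‖ ≤ 2 * ‖w - 1‖ := by
  simpa using log_lip hw (by simp : ‖((1:ℂ) - 1)‖ ≤ 1/2)

lemma exp_two_mu (hγ : 0 < γ) (hγ1 : γ ≠ 1) (n : ℤ) :
    Complex.exp (2 * muSeq γ n) = ((aC γ : ℝ) : ℂ) := by
  have hγ1' : γ + 1 ≠ 0 := by linarith
  have hr : (0:ℝ) < |γ - 1| / (γ + 1) := by
    apply div_pos (abs_pos.2 (sub_ne_zero.2 hγ1)) (by linarith)
  have h2mu : (2 : ℂ) * muSeq γ n
      = (Real.log (|γ - 1| / (γ + 1)) : ℂ) + (2 * nbeta γ n * Real.pi : ℝ) * Complex.I := by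
    simp only [muSeq]
    push_cast
    ring
  rw [h2mu, Complex.exp_add]
  have hexplog : Complex.exp ((Real.log (|γ - 1| / (γ + 1)) : ℂ))
      = ((|γ - 1| / (γ + 1) : ℝ) : ℂ) := by
    rw [← Complex.ofReal_exp, Real.exp_log hr]
  rw [hexplog]
  unfold aC
  rcases lt_or_gt_of_ne hγ1 with h | h
  · have hnb : nbeta γ n = (n : ℝ) + 1/2 := by simp [nbeta, not_lt.2 h.le]
    have habs : |γ - 1| = 1 - γ := by rw [abs_of_neg (by linarith : γ - 1 < 0)]; ring
    have hI : ((2 * nbeta γ n * Real.pi : ℝ) : ℂ) * Complex.I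
        = (n:ℂ) * (2 * Real.pi * Complex.I) + Real.pi * Complex.I := by
      rw [hnb]; push_cast; ring
    rw [hI, Complex.exp_add, Complex.exp_int_mul_two_pi_mul_I, Complex.exp_pi_mul_I]
    rw [habs]
    have hc : ((γ:ℂ) + 1) ≠ 0 := by exact_mod_cast hγ1'
    push_cast
    field_simp
    ring
  · have hnb : nbeta γ n = (n : ℝ) := by simp [nbeta, h]
    have habs : |γ - 1| = γ - 1 := abs_of_pos (by linarith)
    have hI : ((2 * nbeta γ n * Real.pi : ℝ) : ℂ) * Complex.I
        = (n:ℂ) * (2 * Real.pi * Complex.I) := by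
      rw [hnb]; push_cast; ring
    rw [hI, Complex.exp_int_mul_two_pi_mul_I, habs]
    push_cast
    ring

/-- For `l` in a small ball around `μₙ`, `|l| ≥ |n|`. -/
lemma abs_ge_of_mem_ball (n : ℤ) (ρ : ℝ) (hρ : ρ ≤ 1/2)
    (hn : (2:ℝ) ≤ |(n:ℝ)|)
    (l : ℂ) (hl : ‖l - muSeq γ n‖ ≤ ρ) : |(n:ℝ)| ≤ ‖l‖ := by
  have hpi : (3:ℝ) < Real.pi := Real.pi_gt_three
  have him : l.im = nbeta γ n * Real.pi + (l - muSeq γ n).im := by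
    simp [muSeq, Complex.add_im, Complex.sub_im]
  have h1 : |(l - muSeq γ n).im| ≤ ρ := (Complex.abs_im_le_norm _).trans hl
  have h2 : |(n:ℝ)| - 1/2 ≤ |nbeta γ n| := by
    unfold nbeta
    split
    · linarith [le_abs_self (|(n:ℝ)|), abs_nonneg ((n:ℝ))]
    · have h3 := abs_sub_abs_le_abs_sub ((n:ℝ)) ((n:ℝ) + 1/2)
      have h4 : |(n:ℝ) - ((n:ℝ) + 1/2)| = 1/2 := by
        rw [show (n:ℝ) - ((n:ℝ) + 1/2) = -(1/2) by ring, abs_neg]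
        norm_num
      rw [h4] at h3
      linarith
  have h5 : |nbeta γ n * Real.pi| - |(l - muSeq γ n).im| ≤ |l.im| := by
    rw [him]
    have := abs_add_le (nbeta γ n * Real.pi + (l - muSeq γ n).im) (-(l - muSeq γ n).im)
    simp only [add_neg_cancel_right, abs_neg] at this
    linarith
  have h6 : |nbeta γ n * Real.pi| = |nbeta γ n| * Real.pi := by
    rw [abs_mul, abs_of_pos Real.pi_pos]
  have h7 : |l.im| ≤ ‖l‖ := Complex.abs_im_le_norm l
  nlinarith [abs_nonneg (nbeta γ n)]

end Aux

/-- for all large `|n|` the characteristic equation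
`e^{2λ}((1+γ)λ+β)(1+mλ) = ((1-γ)λ-β)(1-mλ)` has a root `λₙ`
with `|λₙ - μₙ| ≤ C/|n|`. -/
theorem stmt2 (m β γ : ℝ) (hm : 0 < m) (hβ : 0 < β) (hγ : 0 < γ) (hγ1 : γ ≠ 1) :
    ∃ (N : ℕ) (C : ℝ), 0 < C ∧
      ∀ n : ℤ, (N : ℤ) ≤ |n| →
        ∃ l : ℂ,
          Complex.exp (2 * l) * ((1 + γ) * l + β) * (1 + m * l)
            = ((1 - γ) * l - β) * (1 - m * l) ∧
          ‖l - muSeq γ n‖ ≤ C / |(n : ℝ)| := by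
  have hK1pos := K1C_pos (β := β) hm hγ hγ1
  have hK1one := K1C_one (β := β) hm hγ hγ1
  have hK2one := K2C_one (β := β) hm hγ hγ1
  set Nr : ℝ := max (max 2 (R0C m β γ)) (max (4 * K1C m β γ) (Real.sqrt (2 * K2C m β γ)))
    with hNr_def
  refine ⟨⌈Nr⌉₊, K1C m β γ, hK1pos, ?_⟩
  intro n hn
  -- basic facts about |n|
  have hnNr : Nr ≤ |(n:ℝ)| := by
    have h1 : ((⌈Nr⌉₊ : ℤ) : ℝ) ≤ ((|n| : ℤ) : ℝ) := Int.cast_le.2 hn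
    rw [Int.cast_abs] at h1
    push_cast at h1
    exact (Nat.le_ceil Nr).trans h1
  have hn2 : (2:ℝ) ≤ |(n:ℝ)| := le_trans (le_trans (le_max_left _ _) (le_max_left _ _)) hnNr
  have hnpos : (0:ℝ) < |(n:ℝ)| := by linarith
  have hnR0 : R0C m β γ ≤ |(n:ℝ)| :=
    le_trans (le_trans (le_max_right _ _) (le_max_left _ _)) hnNr
  have hnK1 : 4 * K1C m β γ ≤ |(n:ℝ)| :=
    le_trans (le_trans (le_max_left _ _) (le_max_right _ _)) hnNr
  have hnK2 : 2 * K2C m β γ ≤ |(n:ℝ)|^2 := by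
    have h1 : Real.sqrt (2 * K2C m β γ) ≤ |(n:ℝ)| :=
      le_trans (le_trans (le_max_right _ _) (le_max_right _ _)) hnNr
    have h2 : 0 ≤ 2 * K2C m β γ := by linarith
    calc 2 * K2C m β γ = (Real.sqrt (2 * K2C m β γ))^2 := (Real.sq_sqrt h2).symm
      _ ≤ |(n:ℝ)|^2 := pow_le_pow_left₀ (Real.sqrt_nonneg _) h1 2
  set ρ : ℝ := K1C m β γ / |(n:ℝ)| with hρ_def
  have hρ0 : 0 ≤ ρ := by positivity
  have hρ4 : ρ ≤ 1/4 := by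
    rw [hρ_def, div_le_iff₀ hnpos]
    linarith
  set s : Set ℂ := Metric.closedBall (muSeq γ n) ρ with hs_def
  -- |l| ≥ |n| for l ∈ s
  have habs_l : ∀ l ∈ s, |(n:ℝ)| ≤ ‖l‖ := by
    intro l hl
    rw [hs_def, Metric.mem_closedBall, Complex.dist_eq] at hl
    exact abs_ge_of_mem_ball n ρ (by linarith) hn2 l hl
  have habs_l1 : ∀ l ∈ s, (1:ℝ) ≤ ‖l‖ := fun l hl => by
    linarith [habs_l l hl]
  have habs_lR0 : ∀ l ∈ s, R0C m β γ ≤ ‖l‖ := fun l hl =>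
    le_trans hnR0 (habs_l l hl)
  -- |H - 1| bounds on s
  have hH1 : ∀ l ∈ s, ‖Hf m β γ l - 1‖ ≤ ρ := by
    intro l hl
    calc ‖Hf m β γ l - 1‖
        ≤ (K1C m β γ - 1) / ‖l‖ :=
          Hf_sub_one hm hβ hγ hγ1 l (habs_lR0 l hl) (habs_l1 l hl)
      _ ≤ K1C m β γ / |(n:ℝ)| := by
          apply div_le_div₀ (le_of_lt hK1pos) (by linarith) hnpos (habs_l l hl)
      _ = ρ := hρ_def.symm
  have hH1' : ∀ l ∈ s, ‖Hf m β γ l - 1‖ ≤ 1/2 := fun l hl =>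
    le_trans (hH1 l hl) (by linarith)
  -- T maps s to s
  have hmaps : Set.MapsTo (Tf m β γ n) s s := by
    intro l hl
    rw [hs_def, Metric.mem_closedBall, Complex.dist_eq]
    have : Tf m β γ n l - muSeq γ n = Complex.log (Hf m β γ l) / 2 := by
      unfold Tf; ring
    rw [this, norm_div, Complex.norm_two]
    have := log_near_one (hH1' l hl)
    have h2 := hH1 l hl
    linarith
  -- T is a contraction on s
  have hlip : ∀ l ∈ s, ∀ l' ∈ s,
      dist (Tf m β γ n l) (Tf m β γ n l') ≤ (1/2) * dist l l' := by
    intro l hl l' hl'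
    rw [Complex.dist_eq, Complex.dist_eq]
    have hd : Tf m β γ n l - Tf m β γ n l'
        = (Complex.log (Hf m β γ l) - Complex.log (Hf m β γ l')) / 2 := by
      unfold Tf; ring
    rw [hd, norm_div, Complex.norm_two]
    have h1 := log_lip (hH1' l hl) (hH1' l' hl')
    have h2 := Hf_lip hm hβ hγ hγ1 l l' (habs_lR0 l hl) (habs_l1 l hl)
      (habs_lR0 l' hl') (habs_l1 l' hl')
    have h3 : (K2C m β γ - 1) * ‖l - l'‖ / (‖l‖ * ‖l'‖)
        ≤ (1/2) * ‖l - l'‖ := by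
      have hll : |(n:ℝ)| * |(n:ℝ)| ≤ ‖l‖ * ‖l'‖ :=
        mul_le_mul (habs_l l hl) (habs_l l' hl') (le_of_lt hnpos) (norm_nonneg _)
      have h4 : (K2C m β γ - 1) * ‖l - l'‖ / (‖l‖ * ‖l'‖)
          ≤ (K2C m β γ) * ‖l - l'‖ / (|(n:ℝ)| * |(n:ℝ)|) := by
        apply div_le_div₀ _ _ (by positivity) hll
        · positivity
        · apply mul_le_mul_of_nonneg_right (by linarith) (norm_nonneg _)
      have h5 : (K2C m β γ) * ‖l - l'‖ / (|(n:ℝ)| * |(n:ℝ)|)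
          ≤ (1/2) * ‖l - l'‖ := by
        rw [div_le_iff₀ (by positivity)]
        have h6 : |(n:ℝ)| * |(n:ℝ)| = |(n:ℝ)|^2 := by ring
        nlinarith [norm_nonneg (l - l')]
      linarith
    linarith
  -- Banach fixed point
  have hsc : IsComplete s := Metric.isClosed_closedBall.isComplete
  have hcontr : ContractingWith (1/2 : NNReal) (hmaps.restrict (Tf m β γ n) s s) := by
    constructor
    · rw [← NNReal.coe_lt_coe]
      norm_num
    · intro x y
      rw [edist_dist, edist_dist]
      have hd := hlip x x.2 y y.2
      calc ENNReal.ofReal (dist (hmaps.restrict (Tf m β γ n) s s x) (hmaps.restrict (Tf m β γ n) s s y))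
          = ENNReal.ofReal (dist (Tf m β γ n x) (Tf m β γ n y)) := rfl
        _ ≤ ENNReal.ofReal ((1/2 : ℝ) * dist (x:ℂ) (y:ℂ)) := ENNReal.ofReal_le_ofReal hd
        _ = ENNReal.ofReal (1/2 : ℝ) * ENNReal.ofReal (dist (x:ℂ) (y:ℂ)) :=
            ENNReal.ofReal_mul (by norm_num)
        _ = (1/2 : NNReal) * ENNReal.ofReal (dist (x:ℂ) (y:ℂ)) := by
            congr 1
            rw [ENNReal.ofReal_div_of_pos (by norm_num)]
            simp [ENNReal.ofReal_one]
  have hμs : muSeq γ n ∈ s := Metric.mem_closedBall_self hρ0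
  obtain ⟨y, hys, hfy, -, -⟩ := ContractingWith.exists_fixedPoint' hsc hmaps hcontr hμs
    (edist_ne_top _ _)
  -- y satisfies the characteristic equation
  have hHy1 : ‖Hf m β γ y - 1‖ ≤ 1/2 := hH1' y hys
  have hHyne : Hf m β γ y ≠ 0 := by
    intro h
    rw [h] at hHy1
    simp only [zero_sub, norm_neg, norm_one] at hHy1
    norm_num at hHy1
  have hQyne : Qf m β γ y ≠ 0 := Qf_ne hm hβ hγ y (habs_lR0 y hys) (habs_l1 y hys)
  have haC : ((aC γ : ℝ) : ℂ) ≠ 0 := Complex.ofReal_ne_zero.2 (aC_ne hγ hγ1)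
  have h2y : (2:ℂ) * y = 2 * muSeq γ n + Complex.log (Hf m β γ y) := by
    have := hfy
    unfold Function.IsFixedPt at this
    rw [show Tf m β γ n y = muSeq γ n + Complex.log (Hf m β γ y) / 2 from rfl] at this
    linear_combination (2:ℂ) * this.symm
  have hexp : Complex.exp (2 * y) = (aC γ : ℂ) * Hf m β γ y := by
    rw [h2y, Complex.exp_add, exp_two_mu hγ hγ1 n, Complex.exp_log hHyne]
  have hPQ : Complex.exp (2 * y) * Qf m β γ y = Pf m β γ y := by
    rw [hexp]
    unfold Hf
    field_simp
  refine ⟨y, ?_, ?_⟩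
  · have : Complex.exp (2 * y) * (((1 + γ) * y + β) * (1 + m * y)) = Pf m β γ y := hPQ
    rw [← mul_assoc] at this
    rw [this]
    rfl
  · have : dist y (muSeq γ n) ≤ ρ := hys
    rw [Complex.dist_eq] at this
    exact this
end

section
/- Let m, β, γ > 0 be real constants with γ ≠ 1. Set r = |γ−1|/(γ+1), n_β = n if γ > 1 and n_β = n + 1/2 if 0 < γ < 1, and μₙ = (1/2)·ln r + n_β π i. Suppose (λₙ)_{n ∈ ℤ} is a sequence of nonzero complex numbers and C₀ > 0 is such that |λₙ − μₙ| ≤ C₀/|n| for all n ≠ 0. Define fₙ(x) = ((1+γ)λₙ + β)e^{λₙ x} + ((1−γ)λₙ − β)e^{−λₙ x}. Then there exist C > 0 and N ∈ ℕ such that for all integers n with |n| ≥ N and all x ∈ [0,1]: |fₙ(x)/λₙ − ((1+γ) r^{x/2} e^{i n_β π x} + (1−γ) r^{−x/2} e^{−i n_β π x})| ≤ C/|n|, |fₙ'(x)/λₙ² − ((1+γ) r^{x/2} e^{i n_β π x} − (1−γ) r^{−x/2} e^{−i n_β π x})| ≤ C/|n|, |β fₙ(0)/λₙ²| ≤ C/|n|,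 and |fₙ'(1)/λₙ³| ≤ C/|n|. -/
/-- The eigenfunction `f_λ(x) = ((1+γ)λ+β)e^{λx} + ((1-γ)λ-β)e^{-λx}`. -/
noncomputable def efun (γ β : ℝ) (l : ℂ) : ℝ → ℂ :=
  fun x => ((1 + γ) * l + β) * Complex.exp (l * x) + ((1 - γ) * l - β) * Complex.exp (-(l * x))

lemma efun_hasDerivAt (γ β : ℝ) (l : ℂ) (x : ℝ) :
    HasDerivAt (efun γ β l)
      (((1 + γ) * l + β) * (Complex.exp (l * x) * l)
        + ((1 - γ) * l - β) * (Complex.exp (-(l * x)) * (-l))) x := by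
  have h1 : HasDerivAt (fun z : ℂ => Complex.exp (l * z)) (Complex.exp (l * x) * l) (x : ℂ) := by
    simpa using ((hasDerivAt_id (x : ℂ)).const_mul l).cexp
  have h2 : HasDerivAt (fun z : ℂ => Complex.exp (-(l * z)))
      (Complex.exp (-(l * x)) * (-l)) (x : ℂ) := by
    simpa using (((hasDerivAt_id (x : ℂ)).const_mul l).neg).cexp
  exact ((h1.comp_ofReal).const_mul _).add ((h2.comp_ofReal).const_mul _)

lemma expdiff (a b : ℂ) (h : norm (a - b) ≤ 1) :
    norm (Complex.exp a - Complex.exp b)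
      ≤ 2 * Real.exp b.re * norm (a - b) := by
  have he : Complex.exp a - Complex.exp b = Complex.exp b * (Complex.exp (a - b) - 1) := by
    rw [mul_sub, mul_one, ← Complex.exp_add]; ring_nf
  rw [he, norm_mul, Complex.norm_exp]
  calc Real.exp b.re * norm (Complex.exp (a - b) - 1)
      ≤ Real.exp b.re * (2 * norm (a - b)) := by
        exact mul_le_mul_of_nonneg_left (Complex.norm_exp_sub_one_le h) (Real.exp_nonneg _)
    _ = 2 * Real.exp b.re * norm (a - b) := by ring

lemma target_eq (r : ℝ) (hr : 0 < r) (c t x : ℝ) :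
    ((c * r ^ (x / 2) : ℝ) : ℂ) * Complex.exp (Complex.I * (t * x)) =
      (c : ℂ) * Complex.exp ((((Real.log r / 2 : ℝ) : ℂ) + (t : ℝ) * Complex.I) * x) := by
  rw [Real.rpow_def_of_pos hr]
  push_cast [Complex.ofReal_exp]
  rw [mul_assoc, ← Complex.exp_add]
  congr 2
  ring

lemma target_eq_neg (r : ℝ) (hr : 0 < r) (c t x : ℝ) :
    ((c * r ^ (-(x / 2)) : ℝ) : ℂ) * Complex.exp (-(Complex.I * (t * x))) =
      (c : ℂ) * Complex.exp (-((((Real.log r / 2 : ℝ) : ℂ) + (t : ℝ) * Complex.I) * x)) := by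
  rw [Real.rpow_def_of_pos hr]
  push_cast [Complex.ofReal_exp]
  rw [mul_assoc, ← Complex.exp_add]
  congr 2
  ring

lemma abs3 (a b c : ℂ) :
    norm (a + b + c) ≤ norm a + norm b + norm c := by
  calc norm (a + b + c) ≤ norm (a + b) + norm c := norm_add_le _ _
    _ ≤ norm a + norm b + norm c := by
        linarith [norm_add_le a b]

set_option maxHeartbeats 2000000 in
/-- asymptotics of the (normalized) eigenfunctions `fₙ`, their
derivatives, and the boundary traces, uniformly for `x ∈ [0,1]`. -/
theorem stmt3 (m β γ : ℝ) (hm : 0 < m) (hβ : 0 < β) (hγ : 0 < γ) (hγ1 : γ ≠ 1)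
    (l : ℤ → ℂ) (hl : ∀ n, l n ≠ 0) (C₀ : ℝ) (hC₀ : 0 < C₀)
    (hasymp : ∀ n : ℤ, n ≠ 0 → norm (l n - muSeq γ n) ≤ C₀ / |(n : ℝ)|) :
    ∃ (C : ℝ), 0 < C ∧ ∃ N : ℕ, ∀ n : ℤ, (N : ℤ) ≤ |n| → ∀ x ∈ Set.Icc (0:ℝ) 1,
      norm (efun γ β (l n) x / l n
          - (((1 + γ) * (|γ - 1| / (γ + 1)) ^ (x / 2) : ℝ)
              * Complex.exp (Complex.I * (nbeta γ n * Real.pi * x))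
            + ((1 - γ) * (|γ - 1| / (γ + 1)) ^ (-(x / 2)) : ℝ)
              * Complex.exp (-(Complex.I * (nbeta γ n * Real.pi * x))))) ≤ C / |(n : ℝ)| ∧
      norm (deriv (efun γ β (l n)) x / (l n) ^ 2
          - (((1 + γ) * (|γ - 1| / (γ + 1)) ^ (x / 2) : ℝ)
              * Complex.exp (Complex.I * (nbeta γ n * Real.pi * x))
            - ((1 - γ) * (|γ - 1| / (γ + 1)) ^ (-(x / 2)) : ℝ)
              * Complex.exp (-(Complex.I * (nbeta γ n * Real.pi * x))))) ≤ C / |(n : ℝ)| ∧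
      norm ((β : ℂ) * efun γ β (l n) 0 / (l n) ^ 2) ≤ C / |(n : ℝ)| ∧
      norm (deriv (efun γ β (l n)) 1 / (l n) ^ 3) ≤ C / |(n : ℝ)| := by
  set r : ℝ := |γ - 1| / (γ + 1) with hrdef
  have hr : 0 < r := div_pos (abs_pos.2 (sub_ne_zero.2 hγ1)) (by linarith)
  set R₀ : ℝ := |Real.log r| / 2 + 1 with hR₀def
  set E : ℝ := Real.exp R₀ with hEdef
  have hE1 : 1 ≤ E := Real.one_le_exp (by positivity)
  set C : ℝ := 4 * E * C₀ * (1 + γ) + 2 * β * E + 2 * β + 2 * E * (1 + γ + β) with hCdef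
  have hCpos : 0 < C := by positivity
  refine ⟨C, hCpos, ⌈C₀⌉₊ + 2, ?_⟩
  intro n hn x hx
  obtain ⟨hx0, hx1⟩ := hx
  -- basic size facts about n
  have hnabs : ((⌈C₀⌉₊ : ℝ) + 2) ≤ |(n : ℝ)| := by
    rw [← Int.cast_abs]
    exact_mod_cast hn
  have hn2 : (2 : ℝ) ≤ |(n : ℝ)| := by
    have := Nat.cast_nonneg (α := ℝ) ⌈C₀⌉₊
    linarith
  have hnpos : (0 : ℝ) < |(n : ℝ)| := by linarith
  have hnC : C₀ ≤ |(n : ℝ)| := by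
    have := Nat.le_ceil C₀
    linarith
  have hn0 : n ≠ 0 := by
    intro h; rw [h] at hnpos; simp at hnpos
  -- notation
  set L : ℂ := l n with hLdef
  have hL : L ≠ 0 := hl n
  set μ : ℂ := muSeq γ n with hμdef
  set d : ℂ := L - μ with hddef
  have hd : norm d ≤ C₀ / |(n : ℝ)| := hasymp n hn0
  have hd1 : norm d ≤ 1 := hd.trans (by rw [div_le_one hnpos]; exact hnC)
  have hμre : μ.re = Real.log r / 2 := by simp [hμdef, muSeq, hrdef]
  have hμim : μ.im = nbeta γ n * Real.pi := by simp [hμdef, muSeq]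
  -- lower bound on |L|
  have hnb : |(n : ℝ)| - 1 / 2 ≤ |nbeta γ n| := by
    unfold nbeta
    split
    · linarith [le_refl |(n : ℝ)|]
    · have : |(n : ℝ)| ≤ |(n : ℝ) + 1 / 2| + 1 / 2 := by
        calc |(n : ℝ)| = |((n : ℝ) + 1 / 2) + (-(1/2))| := by ring_nf
          _ ≤ |(n : ℝ) + 1 / 2| + |(-(1/2) : ℝ)| := abs_add_le _ _
          _ = |(n : ℝ) + 1 / 2| + 1 / 2 := by norm_num
      linarith
  have hLim : |μ.im| - 1 ≤ |L.im| := by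
    have h1 : μ.im = L.im - d.im := by simp [hddef]
    have h2 : |μ.im| ≤ |L.im| + |d.im| := by
      rw [h1]
      calc |L.im - d.im| = |L.im + -d.im| := by ring_nf
        _ ≤ |L.im| + |-d.im| := abs_add_le _ _
        _ = |L.im| + |d.im| := by rw [abs_neg]
    have h3 : |d.im| ≤ 1 := (Complex.abs_im_le_norm d).trans hd1
    linarith
  have hLlow : |(n : ℝ)| ≤ norm L := by
    have hπ := Real.pi_gt_three
    have h1 : |nbeta γ n| * Real.pi ≥ (|(n : ℝ)| - 1/2) * Real.pi :=
      mul_le_mul_of_nonneg_right hnb (by positivity)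
    have h2 : |μ.im| = |nbeta γ n| * Real.pi := by
      rw [hμim, abs_mul, abs_of_pos Real.pi_pos]
    have h3 : |L.im| ≤ norm L := Complex.abs_im_le_norm L
    nlinarith [hLim, hn2]
  have hLpos : (0 : ℝ) < norm L := lt_of_lt_of_le hnpos hLlow
  -- real part bounds
  have hLre : |L.re| ≤ R₀ := by
    have h1 : L.re = μ.re + d.re := by simp [hddef]
    have h2 : |d.re| ≤ 1 := (Complex.abs_re_le_norm d).trans hd1
    have h3 : |μ.re| = |Real.log r| / 2 := by rw [hμre, abs_div]; norm_num
    calc |L.re| ≤ |μ.re| + |d.re| := h1 ▸ abs_add_le _ _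
      _ ≤ R₀ := by rw [h3, hR₀def]; linarith
  have hμre' : |μ.re| ≤ R₀ := by
    rw [hμre, hR₀def]
    calc |Real.log r / 2| = |Real.log r| / 2 := by rw [abs_div]; norm_num
      _ ≤ |Real.log r| / 2 + 1 := by linarith
  -- exp bounds
  have habs_exp : ∀ z : ℂ, |z.re| ≤ R₀ → ∀ y : ℝ, 0 ≤ y → y ≤ 1 →
      norm (Complex.exp (z * y)) ≤ E ∧ norm (Complex.exp (-(z * y))) ≤ E := by
    intro z hz y hy0 hy1
    have hre : (z * (y : ℂ)).re = z.re * y := by simp [Complex.mul_re]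
    have h1 : z.re * y ≤ R₀ := by
      calc z.re * y ≤ |z.re| * y := mul_le_mul_of_nonneg_right (le_abs_self _) hy0
        _ ≤ R₀ * 1 := mul_le_mul hz hy1 hy0 (by positivity)
        _ = R₀ := mul_one _
    have h2 : -(z.re * y) ≤ R₀ := by
      calc -(z.re * y) ≤ |z.re| * y := by
            rw [← neg_mul]; exact mul_le_mul_of_nonneg_right (neg_le_abs _) hy0
        _ ≤ R₀ * 1 := mul_le_mul hz hy1 hy0 (by positivity)
        _ = R₀ := mul_one _
    constructor
    · rw [Complex.norm_exp, hre]; exact Real.exp_le_exp.2 h1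
    · rw [Complex.norm_exp, Complex.neg_re, hre]; exact Real.exp_le_exp.2 h2
  obtain ⟨hexpL, hexpL'⟩ := habs_exp L hLre x hx0 hx1
  obtain ⟨hexpμ, hexpμ'⟩ := habs_exp μ hμre' x hx0 hx1
  obtain ⟨hexpL1, hexpL1'⟩ := habs_exp L hLre 1 zero_le_one le_rfl
  -- exp difference bounds
  have hdx : norm (L * x - μ * x) ≤ C₀ / |(n : ℝ)| := by
    have : L * (x : ℂ) - μ * x = d * x := by rw [hddef]; ring
    rw [this, norm_mul]
    calc norm d * norm (x : ℂ)
        ≤ (C₀ / |(n : ℝ)|) * 1 := by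
          apply mul_le_mul hd _ (norm_nonneg _) (by positivity)
          rw [Complex.norm_real, Real.norm_eq_abs]; rw [abs_of_nonneg hx0]; exact hx1
      _ = C₀ / |(n : ℝ)| := mul_one _
  have hdx1 : norm (L * x - μ * x) ≤ 1 :=
    hdx.trans (by rw [div_le_one hnpos]; exact hnC)
  have hDp : norm (Complex.exp (L * x) - Complex.exp (μ * x))
      ≤ 2 * E * (C₀ / |(n : ℝ)|) := by
    calc norm (Complex.exp (L * x) - Complex.exp (μ * x))
        ≤ 2 * Real.exp ((μ * (x : ℂ)).re) * norm (L * x - μ * x) := expdiff _ _ hdx1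
      _ ≤ 2 * E * (C₀ / |(n : ℝ)|) := by
          have h1 : Real.exp ((μ * (x : ℂ)).re) ≤ E := by
            rw [← Complex.norm_exp]; exact hexpμ
          gcongr <;> first | exact h1 | exact hdx
  have hdxn : norm (-(L * x) - -(μ * x)) = norm (L * x - μ * x) := by
    rw [show -(L * (x:ℂ)) - -(μ * x) = -(L * x - μ * x) by ring, norm_neg]
  have hDm : norm (Complex.exp (-(L * x)) - Complex.exp (-(μ * x)))
      ≤ 2 * E * (C₀ / |(n : ℝ)|) := by
    calc norm (Complex.exp (-(L * x)) - Complex.exp (-(μ * x)))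
        ≤ 2 * Real.exp ((-(μ * (x : ℂ))).re) * norm (-(L * x) - -(μ * x)) := by
          apply expdiff; rw [hdxn]; exact hdx1
      _ ≤ 2 * E * (C₀ / |(n : ℝ)|) := by
          rw [hdxn]
          have h1 : Real.exp ((-(μ * (x : ℂ))).re) ≤ E := by
            rw [← Complex.norm_exp]; exact hexpμ'
          gcongr <;> first | exact h1 | exact hdx
  -- targets rewritten
  have hT1 : (((1 + γ) * r ^ (x / 2) : ℝ) : ℂ)
      * Complex.exp (Complex.I * (nbeta γ n * Real.pi * x))
      = ((1 + γ : ℝ) : ℂ) * Complex.exp (μ * x) := by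
    have := target_eq r hr (1 + γ) (nbeta γ n * Real.pi) x
    rw [hμdef]; unfold muSeq
    convert this using 3 <;> push_cast <;> ring
  have hT2 : (((1 - γ) * r ^ (-(x / 2)) : ℝ) : ℂ)
      * Complex.exp (-(Complex.I * (nbeta γ n * Real.pi * x)))
      = ((1 - γ : ℝ) : ℂ) * Complex.exp (-(μ * x)) := by
    have := target_eq_neg r hr (1 - γ) (nbeta γ n * Real.pi) x
    rw [hμdef]; unfold muSeq
    convert this using 3 <;> push_cast <;> ring
  -- coefficient bounds
  have h1γ : |1 - γ| ≤ 1 + γ := by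
    rcases abs_cases (1 - γ) with ⟨h, _⟩ | ⟨h, _⟩ <;> rw [h] <;> linarith
  have hβL : norm ((β : ℂ) / L) ≤ β / |(n : ℝ)| := by
    rw [norm_div, Complex.norm_real, Real.norm_eq_abs, abs_of_pos hβ]
    exact div_le_div_of_nonneg_left hβ.le hnpos hLlow
  have habsub : ∀ a b : ℂ, norm (a - b) ≤ norm a + norm b := by
    intro a b
    calc norm (a - b) = norm (a + -b) := by rw [sub_eq_add_neg]
      _ ≤ norm a + norm (-b) := norm_add_le _ _
      _ = norm a + norm b := by rw [norm_neg]
  have hsumEE : norm (Complex.exp (L * x) - Complex.exp (-(L * x))) ≤ E + E := by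
    calc norm (Complex.exp (L * x) - Complex.exp (-(L * x)))
        ≤ norm (Complex.exp (L * x)) + norm (Complex.exp (-(L * x))) :=
          habsub _ _
      _ ≤ E + E := add_le_add hexpL hexpL'
  have hsumEE' : norm (Complex.exp (L * x) + Complex.exp (-(L * x))) ≤ E + E := by
    calc norm (Complex.exp (L * x) + Complex.exp (-(L * x)))
        ≤ norm (Complex.exp (L * x)) + norm (Complex.exp (-(L * x))) :=
          norm_add_le _ _
      _ ≤ E + E := add_le_add hexpL hexpL'
  have hmain : (1 + γ) * (2 * E * (C₀ / |(n : ℝ)|)) + (1 + γ) * (2 * E * (C₀ / |(n : ℝ)|))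
      + β / |(n : ℝ)| * (E + E) ≤ C / |(n : ℝ)| := by
    rw [show (1 + γ) * (2 * E * (C₀ / |(n : ℝ)|)) + (1 + γ) * (2 * E * (C₀ / |(n : ℝ)|))
        + β / |(n : ℝ)| * (E + E) = (4 * E * C₀ * (1 + γ) + 2 * β * E) / |(n : ℝ)| by
      field_simp; ring]
    gcongr
    rw [hCdef]
    have hE0 : (0:ℝ) < E := by positivity
    nlinarith [mul_pos hE0 hC₀, mul_pos hE0 hβ,
      mul_pos hE0 (show (0:ℝ) < 1 + γ + β by linarith),
      mul_pos (mul_pos hE0 hC₀) (show (0:ℝ) < 1 + γ by linarith)]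
  refine ⟨?_, ?_, ?_, ?_⟩
  · -- first bound
    rw [hT1, hT2]
    have key1 : efun γ β L x / L
        - (((1 + γ : ℝ) : ℂ) * Complex.exp (μ * x) + ((1 - γ : ℝ) : ℂ) * Complex.exp (-(μ * x)))
        = ((1 + γ : ℝ) : ℂ) * (Complex.exp (L * x) - Complex.exp (μ * x))
          + ((1 - γ : ℝ) : ℂ) * (Complex.exp (-(L * x)) - Complex.exp (-(μ * x)))
          + ((β : ℂ) / L) * (Complex.exp (L * x) - Complex.exp (-(L * x))) := by
      simp only [efun]
      field_simp
      push_cast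
      ring
    rw [key1]
    calc norm _ ≤ norm (((1 + γ : ℝ) : ℂ) * (Complex.exp (L * x) - Complex.exp (μ * x)))
          + norm (((1 - γ : ℝ) : ℂ) * (Complex.exp (-(L * x)) - Complex.exp (-(μ * x))))
          + norm (((β : ℂ) / L) * (Complex.exp (L * x) - Complex.exp (-(L * x)))) := abs3 _ _ _
      _ ≤ (1 + γ) * (2 * E * (C₀ / |(n : ℝ)|)) + (1 + γ) * (2 * E * (C₀ / |(n : ℝ)|))
          + β / |(n : ℝ)| * (E + E) := by
          have ha : norm (((1 + γ : ℝ) : ℂ) * (Complex.exp (L * x) - Complex.exp (μ * x)))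
              ≤ (1 + γ) * (2 * E * (C₀ / |(n : ℝ)|)) := by
            rw [norm_mul, Complex.norm_real, Real.norm_eq_abs, abs_of_pos (by linarith : (0:ℝ) < 1 + γ)]
            exact mul_le_mul_of_nonneg_left hDp (by linarith)
          have hb : norm (((1 - γ : ℝ) : ℂ) * (Complex.exp (-(L * x)) - Complex.exp (-(μ * x))))
              ≤ (1 + γ) * (2 * E * (C₀ / |(n : ℝ)|)) := by
            rw [norm_mul, Complex.norm_real, Real.norm_eq_abs]
            exact mul_le_mul h1γ hDm (norm_nonneg _) (by linarith)
          have hc : norm (((β : ℂ) / L) * (Complex.exp (L * x) - Complex.exp (-(L * x))))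
              ≤ β / |(n : ℝ)| * (E + E) := by
            rw [norm_mul]
            exact mul_le_mul hβL hsumEE (norm_nonneg _) (by positivity)
          linarith
      _ ≤ C / |(n : ℝ)| := hmain
  · -- second bound
    rw [hT1, hT2, (efun_hasDerivAt γ β L x).deriv]
    have key2 : (((1 + γ) * L + β) * (Complex.exp (L * x) * L)
          + ((1 - γ) * L - β) * (Complex.exp (-(L * x)) * (-L))) / L ^ 2
        - (((1 + γ : ℝ) : ℂ) * Complex.exp (μ * x) - ((1 - γ : ℝ) : ℂ) * Complex.exp (-(μ * x)))
        = ((1 + γ : ℝ) : ℂ) * (Complex.exp (L * x) - Complex.exp (μ * x))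
          + ((γ - 1 : ℝ) : ℂ) * (Complex.exp (-(L * x)) - Complex.exp (-(μ * x)))
          + ((β : ℂ) / L) * (Complex.exp (L * x) + Complex.exp (-(L * x))) := by
      field_simp
      push_cast
      ring
    rw [key2]
    calc norm _ ≤ norm (((1 + γ : ℝ) : ℂ) * (Complex.exp (L * x) - Complex.exp (μ * x)))
          + norm (((γ - 1 : ℝ) : ℂ) * (Complex.exp (-(L * x)) - Complex.exp (-(μ * x))))
          + norm (((β : ℂ) / L) * (Complex.exp (L * x) + Complex.exp (-(L * x)))) := abs3 _ _ _
      _ ≤ (1 + γ) * (2 * E * (C₀ / |(n : ℝ)|)) + (1 + γ) * (2 * E * (C₀ / |(n : ℝ)|))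
          + β / |(n : ℝ)| * (E + E) := by
          have ha : norm (((1 + γ : ℝ) : ℂ) * (Complex.exp (L * x) - Complex.exp (μ * x)))
              ≤ (1 + γ) * (2 * E * (C₀ / |(n : ℝ)|)) := by
            rw [norm_mul, Complex.norm_real, Real.norm_eq_abs, abs_of_pos (by linarith : (0:ℝ) < 1 + γ)]
            exact mul_le_mul_of_nonneg_left hDp (by linarith)
          have hb : norm (((γ - 1 : ℝ) : ℂ) * (Complex.exp (-(L * x)) - Complex.exp (-(μ * x))))
              ≤ (1 + γ) * (2 * E * (C₀ / |(n : ℝ)|)) := by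
            rw [norm_mul, Complex.norm_real, Real.norm_eq_abs]
            refine mul_le_mul ?_ hDm (norm_nonneg _) (by linarith)
            rw [abs_sub_comm]; exact h1γ
          have hc : norm (((β : ℂ) / L) * (Complex.exp (L * x) + Complex.exp (-(L * x))))
              ≤ β / |(n : ℝ)| * (E + E) := by
            rw [norm_mul]
            exact mul_le_mul hβL hsumEE' (norm_nonneg _) (by positivity)
          linarith
      _ ≤ C / |(n : ℝ)| := hmain
  · -- third bound
    have h0 : efun γ β L 0 = 2 * L := by
      simp only [efun, Complex.ofReal_zero, mul_zero, neg_zero, Complex.exp_zero, mul_one]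
      ring
    have heq : (β : ℂ) * efun γ β L 0 / L ^ 2 = 2 * (β : ℂ) / L := by
      rw [h0]; field_simp
    rw [heq, norm_div, norm_mul]
    have h2 : norm (2 : ℂ) * norm ((β : ℂ)) = 2 * β := by
      simp [Complex.norm_real, Real.norm_eq_abs, abs_of_pos hβ]
    rw [h2]
    calc 2 * β / norm L ≤ 2 * β / |(n : ℝ)| :=
          div_le_div_of_nonneg_left (by positivity) hnpos hLlow
      _ ≤ C / |(n : ℝ)| := by
          gcongr
          rw [hCdef]
          have hE0 : (0:ℝ) < E := by positivity
          nlinarith [mul_pos hE0 hC₀, mul_pos hE0 hβ,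
            mul_pos hE0 (show (0:ℝ) < 1 + γ + β by linarith),
            mul_pos (mul_pos hE0 hC₀) (show (0:ℝ) < 1 + γ by linarith)]
  · -- fourth bound
    rw [(efun_hasDerivAt γ β L 1).deriv]
    have hLsq : |(n : ℝ)| ≤ norm L ^ 2 := by nlinarith
    have key4 : (((1 + γ) * L + β) * (Complex.exp (L * (1:ℝ)) * L)
          + ((1 - γ) * L - β) * (Complex.exp (-(L * (1:ℝ))) * (-L))) / L ^ 3
        = ((1 + γ : ℝ) : ℂ) * Complex.exp (L * (1:ℝ)) / L
          + (β : ℂ) * Complex.exp (L * (1:ℝ)) / L ^ 2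
          + (((γ - 1 : ℝ) : ℂ) * Complex.exp (-(L * (1:ℝ))) / L
          + (β : ℂ) * Complex.exp (-(L * (1:ℝ))) / L ^ 2) := by
      field_simp
      push_cast
      ring
    rw [key4]
    have hbnd : ∀ (c : ℝ) (e : ℂ), 0 ≤ c → norm e ≤ E →
        norm ((c : ℂ) * e / L) ≤ c * E / |(n : ℝ)| := by
      intro c e hc he
      rw [norm_div, norm_mul, Complex.norm_real, Real.norm_eq_abs, abs_of_nonneg hc]
      apply div_le_div₀ (by positivity) (mul_le_mul_of_nonneg_left he hc) hnpos hLlow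
    have hbnd2 : ∀ (c : ℝ) (e : ℂ), 0 ≤ c → norm e ≤ E →
        norm ((c : ℂ) * e / L ^ 2) ≤ c * E / |(n : ℝ)| := by
      intro c e hc he
      rw [norm_div, norm_mul, norm_pow, Complex.norm_real, Real.norm_eq_abs, abs_of_nonneg hc]
      apply div_le_div₀ (by positivity) (mul_le_mul_of_nonneg_left he hc) hnpos hLsq
    have h1 := hbnd (1 + γ) (Complex.exp (L * (1:ℝ))) (by linarith) hexpL1
    have h2 := hbnd2 β (Complex.exp (L * (1:ℝ))) hβ.le hexpL1
    have h3 : norm (((γ - 1 : ℝ) : ℂ) * Complex.exp (-(L * (1:ℝ))) / L)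
        ≤ (1 + γ) * E / |(n : ℝ)| := by
      rw [norm_div, norm_mul, Complex.norm_real, Real.norm_eq_abs]
      apply div_le_div₀ (by positivity) ?_ hnpos hLlow
      apply mul_le_mul ?_ hexpL1' (norm_nonneg _) (by linarith)
      rw [abs_sub_comm]; exact h1γ
    have h4 := hbnd2 β (Complex.exp (-(L * (1:ℝ)))) hβ.le hexpL1'
    calc norm _
        ≤ norm (((1 + γ : ℝ) : ℂ) * Complex.exp (L * (1:ℝ)) / L)
            + norm ((β : ℂ) * Complex.exp (L * (1:ℝ)) / L ^ 2)
            + norm (((γ - 1 : ℝ) : ℂ) * Complex.exp (-(L * (1:ℝ))) / L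
              + (β : ℂ) * Complex.exp (-(L * (1:ℝ))) / L ^ 2) := abs3 _ _ _
      _ ≤ (1 + γ) * E / |(n : ℝ)| + β * E / |(n : ℝ)|
            + ((1 + γ) * E / |(n : ℝ)| + β * E / |(n : ℝ)|) := by
          have h34 := (norm_add_le (((γ - 1 : ℝ) : ℂ) * Complex.exp (-(L * (1:ℝ))) / L)
            ((β : ℂ) * Complex.exp (-(L * (1:ℝ))) / L ^ 2))
          linarith
      _ ≤ C / |(n : ℝ)| := by
          rw [show (1 + γ) * E / |(n : ℝ)| + β * E / |(n : ℝ)|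
              + ((1 + γ) * E / |(n : ℝ)| + β * E / |(n : ℝ)|)
              = (2 * E * (1 + γ + β)) / |(n : ℝ)| by field_simp; ring]
          gcongr
          rw [hCdef]
          have hE0 : (0:ℝ) < E := by positivity
          nlinarith [mul_pos hE0 hC₀, mul_pos hE0 hβ,
            mul_pos hE0 (show (0:ℝ) < 1 + γ + β by linarith),
            mul_pos (mul_pos hE0 hC₀) (show (0:ℝ) < 1 + γ by linarith)]
end

section
/- Let m, a, α > 0 be real constants. Every λ ∈ ℂ satisfying the characteristic equation e^{2λ}(1 + α + (a+m)λ) + (1 − α) + (a − m)λ = 0 has strictly negative real part: Re λ < 0. -/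
/-- every root of the characteristic equation
`e^{2λ}(1+α+(a+m)λ) + (1-α) + (a-m)λ = 0` (with `m, a, α > 0`)
has strictly negative real part. -/
theorem stmt5 (m a α : ℝ) (hm : 0 < m) (ha : 0 < a) (hα : 0 < α) (l : ℂ)
    (hchar : Complex.exp (2 * l) * (1 + α + (a + m) * l) + (1 - α) + (a - m) * l = 0) :
    l.re < 0 := by
  by_contra hcon
  push_neg at hcon
  set A : ℂ := 1 + α + (a + m) * l with hAdef
  set B : ℂ := (1 - α) + (a - m) * l with hBdef
  have hAB : Complex.exp (2 * l) * A = -B := by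
    rw [hAdef, hBdef]; linear_combination hchar
  have hnormsq : Complex.normSq B < Complex.normSq A := by
    simp only [hAdef, hBdef, Complex.normSq_apply, Complex.add_re, Complex.add_im,
      Complex.mul_re, Complex.mul_im, Complex.ofReal_re, Complex.ofReal_im,
      Complex.one_re, Complex.one_im, Complex.sub_re, Complex.sub_im]
    nlinarith [mul_pos hm ha, sq_nonneg l.im,
      mul_nonneg (mul_nonneg hm.le ha.le) (sq_nonneg l.im),
      mul_nonneg ha.le hcon, mul_nonneg hm.le hcon,
      mul_nonneg (mul_nonneg ha.le hm.le) (mul_nonneg hcon hcon),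
      mul_nonneg (mul_nonneg hα.le ha.le) hcon,
      mul_nonneg hm.le (mul_nonneg hcon hcon)]
  have habs : ‖B‖ < ‖A‖ := by
    have h1 := Complex.sq_norm A
    have h2 := Complex.sq_norm B
    nlinarith [norm_nonneg A, norm_nonneg B]
  have habsE : ‖Complex.exp (2 * l)‖ = Real.exp (2 * l.re) := by
    rw [Complex.norm_exp]
    congr 1
    simp [Complex.mul_re]
  have h1 : (1 : ℝ) ≤ Real.exp (2 * l.re) := Real.one_le_exp (by linarith)
  have heq : Real.exp (2 * l.re) * ‖A‖ = ‖B‖ := by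
    rw [← habsE, ← norm_mul, hAB, norm_neg]
  nlinarith [norm_nonneg A]
end

section
/- Let β, γ > 0 be real constants. Every λ ∈ ℂ with λ ≠ 0 satisfying λ cosh λ + (γλ + β) sinh λ = 0 has strictly negative real part: Re λ < 0. -/
/-- every nonzero root of `λ cosh λ + (γλ+β) sinh λ = 0`
(with `β, γ > 0`) has strictly negative real part. -/
theorem stmt9 (β γ : ℝ) (hβ : 0 < β) (hγ : 0 < γ) (l : ℂ) (hl : l ≠ 0)
    (hchar : l * Complex.cosh l + (γ * l + β) * Complex.sinh l = 0) :
    l.re < 0 := by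
  by_contra h
  push_neg at h
  set E : ℂ := Complex.exp l with hEdef
  set F : ℂ := Complex.exp (-l) with hFdef
  have hEF : E * F = 1 := by
    rw [hEdef, hFdef, ← Complex.exp_add]; simp
  -- multiply the characteristic equation by 2
  have h2 : l * (E + F) + (γ * l + β) * (E - F) = 0 := by
    have := congrArg (fun z => 2 * z) hchar
    simp only [mul_zero, mul_add] at this
    calc l * (E + F) + (γ * l + β) * (E - F)
        = l * (2 * Complex.cosh l) + (γ * l + β) * (2 * Complex.sinh l) := by
          rw [Complex.two_cosh, Complex.two_sinh]
      _ = 2 * (l * Complex.cosh l) + 2 * ((γ * l + β) * Complex.sinh l) := by ring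
      _ = 0 := this
  -- key identity
  have hkey : ((γ + 1) * l + β) * E ^ 2 = (γ - 1) * l + β := by
    linear_combination E * h2 + ((γ - 1) * l + β) * hEF
  -- take absolute values
  have habs : ‖(γ + 1) * l + β‖ * (Real.exp l.re) ^ 2
      = ‖(γ - 1) * l + β‖ := by
    have := congrArg (‖·‖) hkey
    simpa [hEdef, map_mul, map_pow, Complex.norm_exp] using this
  set a : ℝ := ‖(γ + 1) * l + β‖ with ha
  set b : ℝ := ‖(γ - 1) * l + β‖ with hb
  -- squared moduli
  have hA : a ^ 2 = ((γ + 1) * l.re + β) ^ 2 + ((γ + 1) * l.im) ^ 2 := by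
    rw [ha, Complex.sq_norm, Complex.normSq_apply]
    simp [Complex.add_re, Complex.add_im, Complex.mul_re, Complex.mul_im]
    ring
  have hB : b ^ 2 = ((γ - 1) * l.re + β) ^ 2 + ((γ - 1) * l.im) ^ 2 := by
    rw [hb, Complex.sq_norm, Complex.normSq_apply]
    simp [Complex.add_re, Complex.add_im, Complex.mul_re, Complex.mul_im]
    ring
  have hlpos : 0 < l.re ^ 2 + l.im ^ 2 := by
    have := Complex.normSq_pos.mpr hl
    rw [Complex.normSq_apply] at this
    nlinarith
  have hba : b ^ 2 < a ^ 2 := by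
    rw [hA, hB]
    nlinarith [mul_pos hγ hlpos, mul_nonneg (mul_nonneg hβ.le hγ.le) h]
  have hb0 : 0 ≤ b := hb ▸ norm_nonneg _
  have ha0' : 0 ≤ a := ha ▸ norm_nonneg _
  have ha0 : 0 < a := by nlinarith [sq_nonneg b]
  have hba' : b < a := by nlinarith
  have ht : (1 : ℝ) ≤ Real.exp l.re := Real.one_le_exp h
  have ht2 : (1 : ℝ) ≤ Real.exp l.re ^ 2 := by nlinarith
  nlinarith [mul_le_mul_of_nonneg_left ht2 ha0.le]
end

section
/- Let m, a, α, β, γ > 0 be real constants and let λ ∈ ℂ with λ ≠ 0. There exist twice continuously differentiable functions f, φ : [0,1] → ℂ, not both identically zero, satisfying f''(x) = λ² f(x) and φ''(x) = λ² φ(x) for all x ∈ (0,1), f(0) = 0, (1 + aλ) f'(1) + λ(α + mλ) f(1) = (1 + aλ) φ'(1), φ(1) = 0, and φ'(0) = (γλ + β) φ(0), if and only if at least one of the following two characteristic equations holds: e^{2λ}(1 + α + (a+m)λ) + (1 − α) + (a − m)λ = 0, or λ cosh λ + (γλ + β) sinh λ = 0. -/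
open Set

section Stmt15Helpers
open Complex

lemma hasDerivAt_sinh_lin (l c : ℂ) (x : ℝ) :
    HasDerivAt (fun x : ℝ => Complex.sinh (l * x + c)) (l * Complex.cosh (l * x + c)) x := by
  have h : HasDerivAt (fun z : ℂ => Complex.sinh (l * z + c)) (l * Complex.cosh (l * x + c)) (x : ℂ) := by
    have := (Complex.hasDerivAt_sinh (l * (x:ℂ) + c)).comp (x:ℂ)
      (((hasDerivAt_id (x:ℂ)).const_mul l).add_const c)
    exact this.congr_deriv (by ring)
  exact h.comp_ofReal

lemma hasDerivAt_cosh_lin (l c : ℂ) (x : ℝ) :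
    HasDerivAt (fun x : ℝ => Complex.cosh (l * x + c)) (l * Complex.sinh (l * x + c)) x := by
  have h : HasDerivAt (fun z : ℂ => Complex.cosh (l * z + c)) (l * Complex.sinh (l * x + c)) (x : ℂ) := by
    have := (Complex.hasDerivAt_cosh (l * (x:ℂ) + c)).comp (x:ℂ)
      (((hasDerivAt_id (x:ℂ)).const_mul l).add_const c)
    exact this.congr_deriv (by ring)
  exact h.comp_ofReal

lemma contDiff_sinh_lin (l c : ℂ) : ContDiff ℝ 2 (fun x : ℝ => Complex.sinh (l * x + c)) := by
  have h1 : ContDiff ℝ 2 (fun x : ℝ => l * (x:ℂ) + c) :=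
    (contDiff_const.mul Complex.ofRealCLM.contDiff).add contDiff_const
  exact (Complex.contDiff_sinh.restrict_scalars ℝ |>.of_le le_top).comp h1

lemma deriv_csinh15 (C l c : ℂ) :
    deriv (fun x : ℝ => C * Complex.sinh (l * x + c)) = fun x : ℝ => C * l * Complex.cosh (l * x + c) := by
  funext x
  rw [((hasDerivAt_sinh_lin l c x).const_mul C).deriv]; ring

lemma deriv2_csinh (C l c : ℂ) :
    deriv (deriv (fun x : ℝ => C * Complex.sinh (l * x + c))) =
      fun x : ℝ => l ^ 2 * (C * Complex.sinh (l * x + c)) := by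
  rw [deriv_csinh15]; funext x
  rw [((hasDerivAt_cosh_lin l c x).const_mul (C * l)).deriv]; ring

lemma ident_lemma (a m α : ℝ) (l : ℂ) :
    Complex.exp (2 * l) * (1 + α + (a + m) * l) + (1 - α) + (a - m) * l =
      2 * Complex.exp l * ((1 + a * l) * Complex.cosh l + ((α : ℂ) + m * l) * Complex.sinh l) := by
  rw [two_mul, Complex.exp_add]
  simp only [Complex.cosh, Complex.sinh, Complex.exp_neg]
  have h := Complex.exp_ne_zero l
  field_simp
  ring
lemma rep_lemma (l : ℂ) (f : ℝ → ℂ) (hf : ContDiff ℝ 2 f)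
    (hode : ∀ x ∈ Ioo (0:ℝ) 1, deriv (deriv f) x = l ^ 2 * f x) :
    ∀ x ∈ Icc (0:ℝ) 1,
      l * f x = deriv f 0 * Complex.sinh (l * x) + l * f 0 * Complex.cosh (l * x) ∧
      deriv f x = deriv f 0 * Complex.cosh (l * x) + l * f 0 * Complex.sinh (l * x) := by
  have hf2 : ContDiff ℝ ((1:WithTop ℕ∞) + 1) f := by
    have : ((1:WithTop ℕ∞) + 1) = 2 := by norm_num
    rw [this]; exact hf
  rw [contDiff_succ_iff_deriv] at hf2
  have hdf : Differentiable ℝ f := hf2.1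
  have hf3 : ContDiff ℝ ((0:WithTop ℕ∞) + 1) (deriv f) := by
    have : ((0:WithTop ℕ∞) + 1) = 1 := by norm_num
    rw [this]; exact hf2.2.2
  rw [contDiff_succ_iff_deriv] at hf3
  have hdf' : Differentiable ℝ (deriv f) := hf3.1
  have hcont'' : Continuous (deriv (deriv f)) := hf3.2.2.continuous
  have hext : ∀ x ∈ Icc (0:ℝ) 1, deriv (deriv f) x = l ^ 2 * f x := by
    have h := (Set.EqOn.closure (fun x hx => hode x hx) hcont''
      (continuous_const.mul hdf.continuous))
    intro x hx
    have : Icc (0:ℝ) 1 = closure (Ioo (0:ℝ) 1) := (closure_Ioo one_ne_zero.symm).symm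
    exact h (this ▸ hx)
  set s : ℝ → ℂ := fun x => Complex.sinh (l * x) with hs
  set c : ℝ → ℂ := fun x => Complex.cosh (l * x) with hc
  have hds : ∀ x : ℝ, HasDerivAt s (l * c x) x := by
    intro x; simpa using hasDerivAt_sinh_lin l 0 x
  have hdc : ∀ x : ℝ, HasDerivAt c (l * s x) x := by
    intro x; simpa using hasDerivAt_cosh_lin l 0 x
  set W2 : ℝ → ℂ := fun x => deriv f x * c x - l * f x * s x with hW2def
  set W1 : ℝ → ℂ := fun x => deriv f x * s x - l * f x * c x with hW1def
  have hW2 : ∀ x ∈ Icc (0:ℝ) 1, HasDerivAt W2 0 x := by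
    intro x hx
    have h1 : HasDerivAt (deriv f) (l ^ 2 * f x) x := hext x hx ▸ (hdf' x).hasDerivAt
    have h2 : HasDerivAt f (deriv f x) x := (hdf x).hasDerivAt
    have := ((h1.mul (hdc x)).sub (((h2.const_mul l)).mul (hds x)))
    exact this.congr_deriv (by ring)
  have hW1 : ∀ x ∈ Icc (0:ℝ) 1, HasDerivAt W1 0 x := by
    intro x hx
    have h1 : HasDerivAt (deriv f) (l ^ 2 * f x) x := hext x hx ▸ (hdf' x).hasDerivAt
    have h2 : HasDerivAt f (deriv f x) x := (hdf x).hasDerivAt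
    have := ((h1.mul (hds x)).sub (((h2.const_mul l)).mul (hdc x)))
    exact this.congr_deriv (by ring)
  have hWc : Continuous W2 ∧ Continuous W1 := by
    have hcs : Continuous s := by
      exact Complex.continuous_sinh.comp (continuous_const.mul Complex.continuous_ofReal)
    have hcc : Continuous c :=
      Complex.continuous_cosh.comp (continuous_const.mul Complex.continuous_ofReal)
    exact ⟨((hdf'.continuous.mul hcc).sub ((continuous_const.mul hdf.continuous).mul hcs)),
      ((hdf'.continuous.mul hcs).sub ((continuous_const.mul hdf.continuous).mul hcc))⟩
  have hW2const := constant_of_has_deriv_right_zero (hWc.1.continuousOn (s := Icc 0 1))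
    (fun t ht => (hW2 t ⟨ht.1, ht.2.le⟩).hasDerivWithinAt)
  have hW1const := constant_of_has_deriv_right_zero (hWc.2.continuousOn (s := Icc 0 1))
    (fun t ht => (hW1 t ⟨ht.1, ht.2.le⟩).hasDerivWithinAt)
  intro x hx
  have e2 : W2 x = deriv f 0 := by
    have := hW2const x hx
    simpa [hW2def, hs, hc] using this
  have e1 : W1 x = -(l * f 0) := by
    have := hW1const x hx
    simpa [hW1def, hs, hc] using this
  have e3 : c x ^ 2 - s x ^ 2 = 1 := Complex.cosh_sq_sub_sinh_sq (l * x)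
  simp only [hW2def, hW1def] at e1 e2
  constructor
  · linear_combination (-(c x)) * e1 + (s x) * e2 - (l * f x) * e3
  · linear_combination (-(s x)) * e1 + (c x) * e2 - (deriv f x) * e3
end Stmt15Helpers

/-- eigenvalue problem for the closed-loop operator 𝒜₁, a coupled
pair of boundary value problems for `f` (plant) and `φ` (auxiliary variable q̂).
For `λ ≠ 0`, a not-both-zero C² solution pair exists iff λ satisfies the
characteristic equation of A or that of 𝔸. -/
theorem stmt15 (m a α β γ : ℝ) (hm : 0 < m) (ha : 0 < a) (hα : 0 < α)
    (hβ : 0 < β) (hγ : 0 < γ) (l : ℂ) (hl : l ≠ 0) :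
    (∃ f φ : ℝ → ℂ, ContDiff ℝ 2 f ∧ ContDiff ℝ 2 φ ∧
        (∃ x ∈ Icc (0:ℝ) 1, f x ≠ 0 ∨ φ x ≠ 0) ∧
        (∀ x ∈ Ioo (0:ℝ) 1, deriv (deriv f) x = l ^ 2 * f x) ∧
        (∀ x ∈ Ioo (0:ℝ) 1, deriv (deriv φ) x = l ^ 2 * φ x) ∧
        f 0 = 0 ∧
        (1 + a * l) * deriv f 1 + l * (α + m * l) * f 1 = (1 + a * l) * deriv φ 1 ∧
        φ 1 = 0 ∧
        deriv φ 0 = (γ * l + β) * φ 0) ↔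
    (Complex.exp (2 * l) * (1 + α + (a + m) * l) + (1 - α) + (a - m) * l = 0 ∨
      l * Complex.cosh l + (γ * l + β) * Complex.sinh l = 0) := by
  constructor
  · rintro ⟨f, φ, hf, hφ, ⟨x0, hx0, hnz⟩, hodef, hodeφ, hf0, hbc1, hφ1, hbcφ⟩
    have repf := rep_lemma l f hf hodef
    set ψ : ℝ → ℂ := fun x => φ (1 - x) with hψdef
    have hψ : ContDiff ℝ 2 ψ := hφ.comp (contDiff_const.sub contDiff_id)
    have hdψ : ∀ x : ℝ, deriv ψ x = -deriv φ (1 - x) := fun x => deriv_comp_const_sub φ 1 x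
    have hodeψ : ∀ x ∈ Ioo (0:ℝ) 1, deriv (deriv ψ) x = l ^ 2 * ψ x := by
      intro x hx
      have h1x : (1 - x) ∈ Ioo (0:ℝ) 1 := ⟨by linarith [hx.2], by linarith [hx.1]⟩
      have h1 : deriv ψ = fun x => -deriv φ (1 - x) := funext hdψ
      rw [h1, deriv.fun_neg, deriv_comp_const_sub]
      simp only [neg_neg, hψdef]
      exact hodeφ _ h1x
    have repψ := rep_lemma l ψ hψ hodeψ
    -- endpoint values
    have hψ0 : ψ 0 = 0 := by simpa [hψdef] using hφ1
    have hdψ0 : deriv ψ 0 = -deriv φ 1 := by simpa using hdψ 0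
    have hr1 := repf 1 (by norm_num)
    have hf1 : l * f 1 = deriv f 0 * Complex.sinh l := by
      have := hr1.1; rw [hf0] at this; simpa using this
    have hf'1 : deriv f 1 = deriv f 0 * Complex.cosh l := by
      have := hr1.2; rw [hf0] at this; simpa using this
    have hrψ1 := repψ 1 (by norm_num)
    have hφ0 : l * φ 0 = -deriv φ 1 * Complex.sinh l := by
      have := hrψ1.1
      rw [hψ0, hdψ0] at this
      simpa [hψdef] using this
    have hφ'0 : deriv φ 0 = deriv φ 1 * Complex.cosh l := by
      have := hrψ1.2
      rw [hψ0, hdψ0, hdψ 1] at this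
      simp only [sub_self] at this
      have h2 : -deriv φ 0 = -deriv φ 1 * Complex.cosh l := by simpa using this
      linear_combination -h2
    -- nontriviality
    have hkey : deriv f 0 ≠ 0 ∨ deriv φ 1 ≠ 0 := by
      by_contra hcon
      push_neg at hcon
      obtain ⟨h1, h2⟩ := hcon
      have hfx0 : f x0 = 0 := by
        have := (repf x0 hx0).1
        rw [h1, hf0] at this
        simp only [zero_mul, mul_zero, zero_add, add_zero] at this
        exact (mul_eq_zero.mp this).resolve_left hl
      have hφx0 : φ x0 = 0 := by
        have hx0' : (1 - x0) ∈ Icc (0:ℝ) 1 := ⟨by linarith [hx0.2], by linarith [hx0.1]⟩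
        have := (repψ (1 - x0) hx0').1
        rw [hψ0, hdψ0, h2] at this
        simp only [neg_zero, zero_mul, mul_zero, zero_add, add_zero] at this
        have hx0eq : ψ (1 - x0) = φ x0 := by simp [hψdef]
        rw [hx0eq] at this
        exact (mul_eq_zero.mp this).resolve_left hl
      rcases hnz with h | h
      · exact h hfx0
      · exact h hφx0
    -- characteristic algebra
    have hE : deriv φ 1 * (l * Complex.cosh l + ((γ:ℂ) * l + β) * Complex.sinh l) = 0 := by
      linear_combination (-l) * hφ'0 + l * hbcφ + ((γ:ℂ) * l + β) * hφ0
    have hD : deriv f 0 * l * ((1 + a * l) * Complex.cosh l + ((α:ℂ) + m * l) * Complex.sinh l) =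
        (1 + a * l) * (l * deriv φ 1) := by
      linear_combination l * hbc1 - (1 + (a:ℂ) * l) * l * hf'1 - ((α:ℂ) + m * l) * l * hf1
    by_cases hφ'1 : deriv φ 1 = 0
    · left
      have hf'0 : deriv f 0 ≠ 0 := hkey.resolve_right (by simp [hφ'1])
      rw [hφ'1, mul_zero, mul_zero] at hD
      have hD0 : (1 + a * l) * Complex.cosh l + ((α:ℂ) + m * l) * Complex.sinh l = 0 := by
        rcases mul_eq_zero.mp hD with h | h
        · exact absurd (mul_eq_zero.mp h) (by push_neg; exact ⟨hf'0, hl⟩)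
        · exact h
      linear_combination ident_lemma a m α l + 2 * Complex.exp l * hD0
    · right
      exact (mul_eq_zero.mp hE).resolve_left hφ'1
  · intro h
    by_cases hD : (1 + a * l) * Complex.cosh l + ((α:ℂ) + m * l) * Complex.sinh l = 0
    · -- construction 1 : f = sinh (l x), φ = 0
      have hd0fun : deriv (0 : ℝ → ℂ) = 0 := funext fun t => deriv_const t (0:ℂ)
      refine ⟨fun x : ℝ => (1:ℂ) * Complex.sinh (l * x + 0), 0,
        contDiff_const.mul (contDiff_sinh_lin l 0), contDiff_const, ?_, ?_, ?_, ?_, ?_, ?_, ?_⟩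
      · by_contra hcon
        push_neg at hcon
        have hzero : ∀ x ∈ Icc (0:ℝ) 1, (1:ℂ) * Complex.sinh (l * x + 0) = 0 :=
          fun x hx => ((hcon x hx).1)
        have hnb : Icc (0:ℝ) 1 ∈ nhds (1/2 : ℝ) := Icc_mem_nhds (by norm_num) (by norm_num)
        have hev : (fun x : ℝ => (1:ℂ) * Complex.sinh (l * x + 0)) =ᶠ[nhds (1/2:ℝ)] (fun _ => 0) :=
          Filter.eventually_of_mem hnb (fun x hx => hzero x hx)
        have hd0 : deriv (fun x : ℝ => (1:ℂ) * Complex.sinh (l * x + 0)) (1/2) = 0 := by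
          rw [hev.deriv_eq]; simp
        rw [deriv_csinh15] at hd0
        have hch : Complex.cosh (l * ((1:ℝ)/2) + 0) = 0 := by
          simpa [hl] using hd0
        have hsh : Complex.sinh (l * ((1:ℝ)/2) + 0) = 0 := by
          simpa using hzero (1/2) (by norm_num)
        have := Complex.cosh_sq_sub_sinh_sq (l * ((1:ℝ)/2) + 0)
        rw [hch, hsh] at this
        norm_num at this
      · intro x hx; rw [deriv2_csinh]
      · intro x hx; rw [hd0fun, hd0fun]; simp
      · simp
      · rw [deriv_csinh15, hd0fun]
        simp only [Pi.zero_apply, mul_zero]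
        push_cast
        simp only [mul_one, add_zero, one_mul]
        linear_combination l * hD
      · simp
      · rw [hd0fun]; simp
    · -- hD ≠ 0 : must be the 𝔸 equation
      have hE : l * Complex.cosh l + ((γ:ℂ) * l + β) * Complex.sinh l = 0 := by
        rcases h with h | h
        · exfalso
          apply hD
          have h2 : 2 * Complex.exp l *
              ((1 + a * l) * Complex.cosh l + ((α:ℂ) + m * l) * Complex.sinh l) = 0 := by
            rw [← ident_lemma a m α l]; exact h
          have h3 : (2 : ℂ) * Complex.exp l ≠ 0 := by
            simp [Complex.exp_ne_zero]
          exact (mul_eq_zero.mp h2).resolve_left h3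
        · exact h
      set D := (1 + (a:ℂ) * l) * Complex.cosh l + ((α:ℂ) + m * l) * Complex.sinh l with hDdef
      refine ⟨fun x : ℝ => ((1 + a * l) / D) * Complex.sinh (l * x + 0),
        fun x : ℝ => (1:ℂ) * Complex.sinh (l * x + (-l)),
        contDiff_const.mul (contDiff_sinh_lin l 0),
        contDiff_const.mul (contDiff_sinh_lin l (-l)), ?_, ?_, ?_, ?_, ?_, ?_, ?_⟩
      · by_contra hcon
        push_neg at hcon
        have hzero : ∀ x ∈ Icc (0:ℝ) 1, (1:ℂ) * Complex.sinh (l * x + (-l)) = 0 :=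
          fun x hx => ((hcon x hx).2)
        have hnb : Icc (0:ℝ) 1 ∈ nhds (1/2 : ℝ) := Icc_mem_nhds (by norm_num) (by norm_num)
        have hev : (fun x : ℝ => (1:ℂ) * Complex.sinh (l * x + (-l))) =ᶠ[nhds (1/2:ℝ)] (fun _ => 0) :=
          Filter.eventually_of_mem hnb (fun x hx => hzero x hx)
        have hd0 : deriv (fun x : ℝ => (1:ℂ) * Complex.sinh (l * x + (-l))) (1/2) = 0 := by
          rw [hev.deriv_eq]; simp
        rw [deriv_csinh15] at hd0
        have hch : Complex.cosh (l * ((1:ℝ)/2) + (-l)) = 0 := by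
          simpa [hl] using hd0
        have hsh : Complex.sinh (l * ((1:ℝ)/2) + (-l)) = 0 := by
          simpa using hzero (1/2) (by norm_num)
        have := Complex.cosh_sq_sub_sinh_sq (l * ((1:ℝ)/2) + (-l))
        rw [hch, hsh] at this
        norm_num at this
      · intro x hx; rw [deriv2_csinh]
      · intro x hx; rw [deriv2_csinh]
      · simp
      · rw [deriv_csinh15, deriv_csinh15]
        push_cast
        simp only [mul_one, add_zero, one_mul, add_neg_cancel, Complex.cosh_zero]
        field_simp
        ring
      · push_cast; simp
      · rw [deriv_csinh15]
        push_cast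
        simp only [mul_zero, zero_add, one_mul, mul_one, Complex.cosh_neg, Complex.sinh_neg]
        linear_combination hE
end
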